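/- arXiv:2404.02365 — 5 statements merged into one kernel-verified Lean document; each statement's English description precedes it below -/
import Mathlib

section
/- Assume in addition that 𝔤 is semisimple. Then for all a, b ∈ 𝔩 one has κ_𝔤(a,b) = 2·tr_𝔲(ad(a)∘ad(b)) + tr_𝔩(ad(a)∘ad(b)). -/
open Module LinearMap

/-- The eigenspace of `ad ξ` with eigenvalue the integer `j`; for a grading element `ξ`
these are the graded pieces `𝔤_j`. -/
def adEig {g : Type*} [LieRing g] [LieAlgebra ℂ g] (ξ : g) (j : ℤ) : Submodule ℂ g :=
  Module.End.eigenspace (LieAlgebra.ad ℂ g ξ) (j : ℂ)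

/-- The trace of an endomorphism `f` restricted to an `f`-invariant subspace `W`. -/
noncomputable def traceOn {g : Type*} [AddCommGroup g] [Module ℂ g]
    (W : Submodule ℂ g) (f : g →ₗ[ℂ] g) (hf : ∀ x ∈ W, f x ∈ W) : ℂ :=
  LinearMap.trace ℂ W (f.restrict hf)

lemma traceOn_eq_zero_of_eq_bot {g : Type*} [AddCommGroup g] [Module ℂ g]
    {W : Submodule ℂ g} (hW : W = ⊥) (f : g →ₗ[ℂ] g) (hf : ∀ x ∈ W, f x ∈ W) :
    traceOn W f hf = 0 := by
  subst hW
  have : f.restrict hf = 0 := Subsingleton.elim _ _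
  rw [traceOn, this, map_zero]

/-- The trace of the dual map equals the trace. -/
lemma trace_dualMap_eq {V : Type*} [AddCommGroup V] [Module ℂ V] [FiniteDimensional ℂ V]
    (f : V →ₗ[ℂ] V) : trace ℂ (Module.Dual ℂ V) f.dualMap = trace ℂ V f := by
  classical
  let b := Module.finBasis ℂ V
  rw [trace_eq_matrix_trace ℂ b.dualBasis, trace_eq_matrix_trace ℂ b]
  have h : toMatrix b.dualBasis b.dualBasis f.dualMap = Matrix.transpose (toMatrix b b f) := by
    ext i j
    rw [toMatrix_apply, Matrix.transpose_apply, toMatrix_apply, Basis.dualBasis_repr,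
      dualMap_apply, Basis.dualBasis_apply]
  rw [h, Matrix.trace_transpose]

/-- If `B` is a nondegenerate pairing intertwining `T` and `S`, then `T` and `S` have the
same trace. -/
lemma trace_eq_trace_of_dual_pair {V W : Type*} [AddCommGroup V] [Module ℂ V]
    [AddCommGroup W] [Module ℂ W] [FiniteDimensional ℂ V] [FiniteDimensional ℂ W]
    (B : V →ₗ[ℂ] W →ₗ[ℂ] ℂ) (T : V →ₗ[ℂ] V) (S : W →ₗ[ℂ] W)
    (hB1 : ∀ v, (∀ w, B v w = 0) → v = 0)
    (hB2 : ∀ w, (∀ v, B v w = 0) → w = 0)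
    (hTS : ∀ v w, B (T v) w = B v (S w)) :
    trace ℂ V T = trace ℂ W S := by
  have hinj : Function.Injective B := by
    intro v₁ v₂ h
    rw [← sub_eq_zero]
    apply hB1
    intro w
    simp [map_sub, h]
  have hinj' : Function.Injective B.flip := by
    intro w₁ w₂ h
    rw [← sub_eq_zero]
    apply hB2
    intro v
    have h' := congrArg (fun φ => φ v) h
    simp only [flip_apply] at h'
    simp [map_sub, h']
  have hrank : finrank ℂ V = finrank ℂ (Module.Dual ℂ W) := by
    rw [Subspace.dual_finrank_eq]
    refine le_antisymm ?_ ?_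
    · have := LinearMap.finrank_le_finrank_of_injective hinj
      rwa [Subspace.dual_finrank_eq] at this
    · have := LinearMap.finrank_le_finrank_of_injective hinj'
      rwa [Subspace.dual_finrank_eq] at this
  let e : V ≃ₗ[ℂ] Module.Dual ℂ W := B.linearEquivOfInjective hinj hrank
  have he : ∀ v : V, e v = B v := fun v => rfl
  have hT : T = e.symm.toLinearMap ∘ₗ S.dualMap ∘ₗ e.toLinearMap := by
    apply LinearMap.ext
    intro v
    apply e.injective
    simp only [coe_comp, Function.comp_apply, LinearEquiv.coe_coe, LinearEquiv.apply_symm_apply]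
    apply LinearMap.ext
    intro w
    rw [he, dualMap_apply, he, hTS]
  have hconj : e.symm.toLinearMap ∘ₗ S.dualMap ∘ₗ e.toLinearMap = e.symm.conj S.dualMap := by
    rw [LinearEquiv.conj_apply, LinearEquiv.symm_symm]
    rfl
  rw [hT, hconj, trace_conj', trace_dualMap_eq]

/-- For a semisimple Lie algebra graded by a grading element `ξ`, the kernel of the Killing
form is contained in the zero eigenspace of `ad ξ`. -/
lemma mem_adEig_zero_of_killingForm_eq_zero {g : Type*} [LieRing g] [LieAlgebra ℂ g]
    [FiniteDimensional ℂ g] [LieAlgebra.IsSemisimple ℂ g] (ξ : g)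
    (hdiag : ⨆ j : ℤ, adEig ξ j = ⊤) {x : g} (hx : killingForm ℂ g x = 0) :
    x ∈ adEig ξ 0 := by
  classical
  set I : LieIdeal ℂ g := LieIdeal.killingCompl ℂ g ⊤ with hIdef
  set Icoe : Submodule ℂ g := LieSubmodule.toSubmodule I with hIcoedef
  have hmemI : ∀ w : g, w ∈ Icoe ↔ killingForm ℂ g w = 0 := by
    intro w
    constructor
    · intro h
      have h' : ∀ y ∈ (⊤ : LieIdeal ℂ g), killingForm ℂ g y w = 0 :=
        (LieIdeal.mem_killingCompl ℂ g ⊤).mp h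
      apply LinearMap.ext
      intro y
      rw [LieModule.traceForm_comm]
      exact h' y trivial
    · intro h
      refine (LieIdeal.mem_killingCompl ℂ g ⊤).mpr ?_
      intro y _
      rw [LieModule.traceForm_comm, h]
      rfl
  set J : LieIdeal ℂ g := Iᶜ with hJdef
  have hIJ : ∀ p ∈ I, ∀ q ∈ J, ⁅p, q⁆ = 0 := by
    intro p hp q hq
    have h1 : ⁅p, q⁆ ∈ ⁅I, J⁆ := LieSubmodule.lie_mem_lie hp hq
    have h2 : ⁅I, J⁆ ≤ I ⊓ J := LieSubmodule.lie_le_inf I J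
    have h3 : I ⊓ J = ⊥ := inf_compl_eq_bot
    have h4 := h2 h1
    rw [h3, LieSubmodule.mem_bot] at h4
    exact h4
  obtain ⟨y, hy, z, hz, hyz⟩ : ∃ y ∈ I, ∃ z ∈ J, y + z = ξ := by
    have hsup : I ⊔ J = ⊤ := sup_compl_eq_top
    have : ξ ∈ I ⊔ J := by rw [hsup]; trivial
    exact (LieSubmodule.mem_sup _ _ _).mp this
  have hzI : ∀ w ∈ Icoe, ⁅z, w⁆ = 0 := by
    intro w hw
    have : ⁅w, z⁆ = 0 := hIJ w hw z hz
    rw [← lie_skew, this, neg_zero]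
  have hyw : ∀ w ∈ Icoe, ⁅y, w⁆ = ⁅ξ, w⁆ := by
    intro w hw
    rw [← hyz, add_lie, hzI w hw, add_zero]
  have hImaps : ∀ w ∈ Icoe, (LieAlgebra.ad ℂ g ξ) w ∈ Icoe := by
    intro w hw
    have : ⁅ξ, w⁆ ∈ I := I.lie_mem hw
    exact this
  set F : Module.End ℂ Icoe := (LieAlgebra.ad ℂ g ξ).restrict hImaps with hFdef
  have hall : ∀ w : g, (LieAlgebra.ad ℂ g y ∘ₗ LieAlgebra.ad ℂ g y) w ∈ Icoe := by
    intro w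
    have h1 : ⁅w, y⁆ ∈ I := I.lie_mem hy
    have h2 : ⁅y, w⁆ ∈ I := by
      rw [← lie_skew]
      exact neg_mem h1
    have h3 : ⁅y, ⁅y, w⁆⁆ ∈ I := I.lie_mem h2
    exact h3
  have hyker : killingForm ℂ g y = 0 := (hmemI y).mp hy
  have htr0 : trace ℂ Icoe ((LieAlgebra.ad ℂ g y ∘ₗ LieAlgebra.ad ℂ g y).restrict
      (fun w _ => hall w)) = 0 := by
    rw [LinearMap.trace_restrict_eq_of_forall_mem Icoe _ hall, ← killingForm_apply_apply,
      hyker]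
    rfl
  have hFF : (LieAlgebra.ad ℂ g y ∘ₗ LieAlgebra.ad ℂ g y).restrict (fun w _ => hall w)
      = F ∘ₗ F := by
    apply LinearMap.ext
    intro w
    apply Subtype.ext
    have hmemFw : ⁅ξ, (w : g)⁆ ∈ Icoe := by
      have := hImaps (w : g) w.2
      rwa [LieAlgebra.ad_apply] at this
    calc (((LieAlgebra.ad ℂ g y ∘ₗ LieAlgebra.ad ℂ g y).restrict (fun w _ => hall w) w :
            Icoe) : g)
        = ⁅y, ⁅y, (w : g)⁆⁆ := by
          simp [LinearMap.restrict_coe_apply, LieAlgebra.ad_apply]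
      _ = ⁅y, ⁅ξ, (w : g)⁆⁆ := by rw [hyw _ w.2]
      _ = ⁅ξ, ⁅ξ, (w : g)⁆⁆ := by rw [hyw _ hmemFw]
      _ = ((F (F w) : Icoe) : g) := by
          simp [hFdef, LinearMap.restrict_coe_apply, LieAlgebra.ad_apply]
  have htrFF0 : trace ℂ Icoe (F ∘ₗ F) = 0 := by rw [← hFF]; exact htr0
  have hEtop : ⨆ μ : ℂ, (LieAlgebra.ad ℂ g ξ).genEigenspace μ 1 = ⊤ := by
    rw [eq_top_iff, ← hdiag]
    exact iSup_le fun j =>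
      le_iSup (fun μ : ℂ => (LieAlgebra.ad ℂ g ξ).genEigenspace μ 1) (j : ℂ)
  have hFtop' : ⨆ μ : ℂ, F.eigenspace μ = ⊤ :=
    Module.End.genEigenspace_restrict_eq_top hImaps hEtop
  have hFind : iSupIndep F.eigenspace := Module.End.eigenspaces_iSupIndep F
  have hFfin : {μ : ℂ | F.eigenspace μ ≠ ⊥}.Finite :=
    WellFoundedGT.finite_ne_bot_of_iSupIndep hFind
  have hFds : DirectSum.IsInternal F.eigenspace :=
    DirectSum.isInternal_submodule_of_iSupIndep_of_iSup_eq_top hFind hFtop'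
  have hFm : ∀ μ : ℂ, Set.MapsTo F (F.eigenspace μ) (F.eigenspace μ) := by
    intro μ v hv
    have hv' : F v = μ • v := Module.End.mem_eigenspace_iff.mp hv
    exact Module.End.mem_eigenspace_iff.mpr (by rw [hv', map_smul, hv'])
  have hFFm : ∀ μ : ℂ, Set.MapsTo (F ∘ₗ F) (F.eigenspace μ) (F.eigenspace μ) :=
    fun μ => (hFm μ).comp (hFm μ)
  have hsum : trace ℂ Icoe (F ∘ₗ F)
      = ∑ μ ∈ hFfin.toFinset, trace ℂ (F.eigenspace μ) ((F ∘ₗ F).restrict (hFFm μ)) :=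
    trace_eq_sum_trace_restrict' hFds hFfin hFFm
  have heig : ∀ μ : ℂ, F.eigenspace μ ≠ ⊥ → ∃ j : ℤ, μ = (j : ℂ) := by
    intro μ hμ
    by_contra hc
    push_neg at hc
    obtain ⟨v, hv, hv0⟩ := (Submodule.ne_bot_iff _).mp hμ
    have hvmem : ((v : Icoe) : g) ∈ Module.End.eigenspace (LieAlgebra.ad ℂ g ξ) μ := by
      refine Module.End.mem_eigenspace_iff.mpr ?_
      have h1 : F v = μ • v := Module.End.mem_eigenspace_iff.mp hv
      have h2 := congrArg (fun u : Icoe => (u : g)) h1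
      simpa [hFdef, LinearMap.restrict_coe_apply] using h2
    have hEind : iSupIndep (Module.End.eigenspace (LieAlgebra.ad ℂ g ξ)) :=
      Module.End.eigenspaces_iSupIndep _
    have hle : Module.End.eigenspace (LieAlgebra.ad ℂ g ξ) μ
        ≤ ⨆ ν : ℂ, ⨆ _ : ν ≠ μ, Module.End.eigenspace (LieAlgebra.ad ℂ g ξ) ν := by
      refine le_trans le_top ?_
      rw [← hdiag]
      refine iSup_le fun j => ?_
      exact le_iSup₂_of_le ((j : ℤ) : ℂ) (fun h => hc j h.symm) le_rfl
    have hbot : Module.End.eigenspace (LieAlgebra.ad ℂ g ξ) μ = ⊥ :=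
      (hEind μ).eq_bot_of_le hle
    rw [hbot] at hvmem
    exact hv0 (Subtype.ext (by simpa using hvmem))
  have hF0 : ∀ μ : ℂ, μ ≠ 0 → F.eigenspace μ = ⊥ := by
    intro μ hμ0
    by_contra hne
    have hμS : μ ∈ hFfin.toFinset := by rwa [Set.Finite.mem_toFinset]
    have hterm : ∀ ν ∈ hFfin.toFinset,
        trace ℂ (F.eigenspace ν) ((F ∘ₗ F).restrict (hFFm ν))
          = ν ^ 2 * (finrank ℂ (F.eigenspace ν) : ℂ) := by
      intro ν _
      have hres : (F ∘ₗ F).restrict (hFFm ν)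
          = (ν ^ 2) • (LinearMap.id : F.eigenspace ν →ₗ[ℂ] F.eigenspace ν) := by
        apply LinearMap.ext
        intro w
        apply Subtype.ext
        have hw : F (w : F.eigenspace ν) = ν • ((w : F.eigenspace ν)) :=
          Module.End.mem_eigenspace_iff.mp w.2
        calc (((F ∘ₗ F).restrict (hFFm ν) w : F.eigenspace ν) : Icoe)
            = F (F (w : F.eigenspace ν)) := by
              rfl
          _ = ν ^ 2 • ((w : F.eigenspace ν) : Icoe) := by
              rw [hw, map_smul, hw, smul_smul, sq]
          _ = (((ν ^ 2 • (LinearMap.id : F.eigenspace ν →ₗ[ℂ] F.eigenspace ν)) w :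
                F.eigenspace ν) : Icoe) := by
              simp
      rw [hres, map_smul, trace_id, smul_eq_mul]
    have hsum0 : ∑ ν ∈ hFfin.toFinset, ν ^ 2 * (finrank ℂ (F.eigenspace ν) : ℂ) = 0 := by
      rw [← Finset.sum_congr rfl hterm, ← hsum, htrFF0]
    have hre0 : ∑ ν ∈ hFfin.toFinset, (ν ^ 2 * (finrank ℂ (F.eigenspace ν) : ℂ)).re = 0 := by
      rw [← Complex.re_sum, hsum0, Complex.zero_re]
    have hnn : ∀ ν ∈ hFfin.toFinset, 0 ≤ (ν ^ 2 * (finrank ℂ (F.eigenspace ν) : ℂ)).re := by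
      intro ν hν
      obtain ⟨j, rfl⟩ := heig ν (by simpa [Set.Finite.mem_toFinset] using hν)
      have hcast : ((j : ℂ) ^ 2 * (finrank ℂ (F.eigenspace ((j : ℤ) : ℂ)) : ℂ))
          = (((j ^ 2 * (finrank ℂ (F.eigenspace ((j : ℤ) : ℂ)) : ℤ) : ℤ)) : ℂ) := by
        push_cast
        ring
      rw [hcast, Complex.intCast_re]
      have : (0 : ℤ) ≤ j ^ 2 * (finrank ℂ (F.eigenspace ((j : ℤ) : ℂ)) : ℤ) :=
        mul_nonneg (sq_nonneg j) (Int.natCast_nonneg _)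
      exact_mod_cast this
    have hz := (Finset.sum_eq_zero_iff_of_nonneg hnn).mp hre0 μ hμS
    obtain ⟨j, rfl⟩ := heig μ hne
    have hd : finrank ℂ (F.eigenspace ((j : ℤ) : ℂ)) ≠ 0 := by
      intro h0
      exact hne (Submodule.finrank_eq_zero.mp h0)
    have hj : j ≠ 0 := by
      intro h
      apply hμ0
      rw [h]
      norm_num
    have hcast : (((j : ℤ) : ℂ) ^ 2 * (finrank ℂ (F.eigenspace ((j : ℤ) : ℂ)) : ℂ))
        = (((j ^ 2 * (finrank ℂ (F.eigenspace ((j : ℤ) : ℂ)) : ℤ) : ℤ)) : ℂ) := by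
      push_cast
      ring
    rw [hcast, Complex.intCast_re] at hz
    have hz' : j ^ 2 * (finrank ℂ (F.eigenspace ((j : ℤ) : ℂ)) : ℤ) = 0 := by
      exact_mod_cast hz
    rcases mul_eq_zero.mp hz' with h | h
    · exact hj (pow_eq_zero_iff (by norm_num) |>.mp h)
    · exact hd (by exact_mod_cast h)
  have hle : (⊤ : Submodule ℂ Icoe) ≤ F.eigenspace 0 := by
    rw [← hFtop']
    refine iSup_le fun μ => ?_
    rcases eq_or_ne μ 0 with rfl | hμ
    · exact le_rfl
    · rw [hF0 μ hμ]
      exact bot_le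
  have hxI : x ∈ Icoe := (hmemI x).mpr hx
  have hF0x : F ⟨x, hxI⟩ = 0 := by
    have hmem : (⟨x, hxI⟩ : Icoe) ∈ F.eigenspace 0 := hle Submodule.mem_top
    have h0 : F ⟨x, hxI⟩ = (0 : ℂ) • (⟨x, hxI⟩ : Icoe) := Module.End.mem_eigenspace_iff.mp hmem
    rw [h0, zero_smul]
  have hxx : ⁅ξ, x⁆ = 0 := by
    have := congrArg (fun u : Icoe => (u : g)) hF0x
    simpa [hFdef, LinearMap.restrict_coe_apply, LieAlgebra.ad_apply] using this
  refine Module.End.mem_eigenspace_iff.mpr ?_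
  rw [LieAlgebra.ad_apply, hxx]
  norm_num

/-- if `𝔤` is semisimple and graded by the grading element `ξ`, with
`𝔩 = 𝔤₀` and `𝔲 = ⊕_{j>0} 𝔤_j`, then for all `a, b ∈ 𝔩` one has
`κ_𝔤(a,b) = 2·tr_𝔲(ad a ∘ ad b) + tr_𝔩(ad a ∘ ad b)`. -/
theorem killingForm_eq_two_mul_trace_nilrad_add_trace_levi
    (g : Type*) [LieRing g] [LieAlgebra ℂ g] [FiniteDimensional ℂ g]
    [LieAlgebra.IsSemisimple ℂ g]
    (ξ : g)
    (hdiag : ⨆ j : ℤ, adEig ξ j = ⊤)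
    (l u : Submodule ℂ g)
    (hl : l = adEig ξ 0)
    (hu : u = ⨆ j : ℤ, ⨆ _ : 0 < j, adEig ξ j)
    (hll : ∀ a ∈ l, ∀ x ∈ l, ⁅a, x⁆ ∈ l)
    (hlu : ∀ a ∈ l, ∀ x ∈ u, ⁅a, x⁆ ∈ u)
    (a b : g) (ha : a ∈ l) (hb : b ∈ l) :
    killingForm ℂ g a b
      = 2 * traceOn u ((LieAlgebra.ad ℂ g a) ∘ₗ (LieAlgebra.ad ℂ g b))
            (fun x hx => hlu a ha _ (hlu b hb x hx))
        + traceOn l ((LieAlgebra.ad ℂ g a) ∘ₗ (LieAlgebra.ad ℂ g b))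
            (fun x hx => hll a ha _ (hll b hb x hx)) := by
  classical
  subst hl hu
  set T : g →ₗ[ℂ] g := LieAlgebra.ad ℂ g a ∘ₗ LieAlgebra.ad ℂ g b with hTdef
  have hmem : ∀ (j : ℤ) (x : g), x ∈ adEig ξ j ↔ ⁅ξ, x⁆ = (j : ℂ) • x := by
    intro j x
    rw [adEig, Module.End.mem_eigenspace_iff, LieAlgebra.ad_apply]
  have hξa : ⁅ξ, a⁆ = 0 := by
    have := (hmem 0 a).mp ha
    simpa using this
  have hξb : ⁅ξ, b⁆ = 0 := by
    have := (hmem 0 b).mp hb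
    simpa using this
  have hmapsto : ∀ c : g, ⁅ξ, c⁆ = 0 → ∀ j : ℤ,
      Set.MapsTo (LieAlgebra.ad ℂ g c) (adEig ξ j) (adEig ξ j) := by
    intro c hc j x hx
    have hx' : ⁅ξ, x⁆ = (j : ℂ) • x := (hmem j x).mp hx
    have hlie : ⁅ξ, ⁅c, x⁆⁆ = (j : ℂ) • ⁅c, x⁆ := by
      rw [leibniz_lie, hc, zero_lie, zero_add, hx', lie_smul]
    have hgoal : ⁅c, x⁆ ∈ adEig ξ j := (hmem j _).mpr hlie
    simpa [LieAlgebra.ad_apply] using hgoal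
  have hTm : ∀ j : ℤ, Set.MapsTo T (adEig ξ j) (adEig ξ j) :=
    fun j x hx => hmapsto a hξa j (hmapsto b hξb j hx)
  have hind : iSupIndep (adEig ξ) :=
    (Module.End.eigenspaces_iSupIndep (LieAlgebra.ad ℂ g ξ)).comp
      (fun i j h => by exact_mod_cast h)
  have hNfin : {j : ℤ | adEig ξ j ≠ ⊥}.Finite := WellFoundedGT.finite_ne_bot_of_iSupIndep hind
  have hds : DirectSum.IsInternal (adEig ξ) :=
    DirectSum.isInternal_submodule_of_iSupIndep_of_iSup_eq_top hind hdiag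
  set τ : ℤ → ℂ := fun j => trace ℂ (adEig ξ j) (T.restrict (hTm j)) with hτ
  have hstep1 : killingForm ℂ g a b = ∑ j ∈ hNfin.toFinset, τ j := by
    rw [killingForm_apply_apply]
    exact trace_eq_sum_trace_restrict' hds hNfin hTm
  set sfin : Finset ℤ := hNfin.toFinset with hsfin
  set Pf : Finset ℤ := sfin.filter (fun j => 0 < j) with hPf
  set Ngf : Finset ℤ := sfin.filter (fun j => j < 0) with hNgfdef
  -- splitting the sum
  have e1 : ∑ j ∈ sfin, τ j
      = ∑ j ∈ Pf, τ j + ∑ j ∈ sfin.filter (fun j => ¬ 0 < j), τ j :=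
    (Finset.sum_filter_add_sum_filter_not sfin (fun j => 0 < j) τ).symm
  have e2 : ∑ j ∈ sfin.filter (fun j => ¬ 0 < j), τ j
      = ∑ j ∈ (sfin.filter (fun j => ¬ 0 < j)).filter (fun j => j < 0), τ j
        + ∑ j ∈ (sfin.filter (fun j => ¬ 0 < j)).filter (fun j => ¬ j < 0), τ j :=
    (Finset.sum_filter_add_sum_filter_not _ (fun j => j < 0) τ).symm
  have e3 : (sfin.filter (fun j => ¬ 0 < j)).filter (fun j => j < 0) = Ngf := by
    rw [Finset.filter_filter, hNgfdef]
    apply Finset.filter_congr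
    intro j _
    constructor
    · rintro ⟨-, h⟩; exact h
    · intro h; exact ⟨by omega, h⟩
  have e4 : (sfin.filter (fun j => ¬ 0 < j)).filter (fun j => ¬ j < 0)
      = sfin.filter (fun j => j = 0) := by
    rw [Finset.filter_filter]
    apply Finset.filter_congr
    intro j _
    constructor
    · rintro ⟨h1, h2⟩; omega
    · intro h; omega
  -- the zero part
  have ezero : ∑ j ∈ sfin.filter (fun j => j = 0), τ j
      = traceOn (adEig ξ 0) T (fun x hx => hll a ha _ (hll b hb x hx)) := by
    have : sfin.filter (fun j => j = 0) = sfin.filter (fun j => j = (0:ℤ)) := rfl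
    rw [Finset.filter_eq']
    by_cases h0 : (0 : ℤ) ∈ sfin
    · rw [if_pos h0, Finset.sum_singleton]
      rfl
    · rw [if_neg h0, Finset.sum_empty]
      have hbot : adEig ξ 0 = ⊥ := by
        by_contra hne
        exact h0 (by simpa [hsfin, Set.Finite.mem_toFinset] using hne)
      exact (traceOn_eq_zero_of_eq_bot hbot _ _).symm
  -- the positive part
  have hindP : iSupIndep (fun i : Pf => adEig ξ (i : ℤ)) := hind.comp Subtype.val_injective
  have hindN : iSupIndep (fun i : Ngf => adEig ξ (i : ℤ)) := hind.comp Subtype.val_injective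
  have hupP : (⨆ j : ℤ, ⨆ _ : 0 < j, adEig ξ j) = ⨆ j ∈ Pf, adEig ξ j := by
    apply le_antisymm
    · refine iSup₂_le fun j hj => ?_
      by_cases hjs : adEig ξ j = ⊥
      · rw [hjs]; exact bot_le
      · refine le_iSup₂_of_le j ?_ le_rfl
        rw [hPf, Finset.mem_filter]
        exact ⟨by rwa [hsfin, Set.Finite.mem_toFinset], hj⟩
    · refine iSup₂_le fun j hj => ?_
      have h0j : 0 < j := (Finset.mem_filter.mp hj).2
      exact le_iSup₂_of_le j h0j le_rfl
  have hTu : Set.MapsTo T (⨆ j : ℤ, ⨆ _ : 0 < j, adEig ξ j : Submodule ℂ g)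
      (⨆ j : ℤ, ⨆ _ : 0 < j, adEig ξ j : Submodule ℂ g) :=
    fun x hx => hlu a ha _ (hlu b hb x hx)
  have epos : trace ℂ (⨆ j : ℤ, ⨆ _ : 0 < j, adEig ξ j : Submodule ℂ g) (T.restrict hTu)
      = ∑ j ∈ Pf, τ j :=
    trace_eq_sum_trace_restrict_of_eq_biSup Pf hindP hTm _ hupP hTu
  -- the negative part
  set ubar : Submodule ℂ g := ⨆ j ∈ Ngf, adEig ξ j with hubardef
  have hTubar : Set.MapsTo T ubar ubar := by
    have h := LinearMap.mapsTo_biSup_of_mapsTo (↑Ngf : Set ℤ) hTm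
    have hset : (⨆ i ∈ (↑Ngf : Set ℤ), adEig ξ i) = ubar := by
      rw [hubardef]
      simp only [Finset.mem_coe]
    rwa [hset] at h
  have eneg : ∑ j ∈ Ngf, τ j = trace ℂ ubar (T.restrict hTubar) :=
    (trace_eq_sum_trace_restrict_of_eq_biSup Ngf hindN hTm ubar hubardef hTubar).symm
  -- orthogonality of graded pieces
  have horth : ∀ (i j : ℤ), i + j ≠ 0 → ∀ x ∈ adEig ξ i, ∀ y ∈ adEig ξ j,
      killingForm ℂ g x y = 0 := by
    intro i j hij x hx y hy
    have h1 : killingForm ℂ g ⁅ξ, x⁆ y = - killingForm ℂ g x ⁅ξ, y⁆ :=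
      LieModule.traceForm_apply_lie_apply' ℂ g g ξ x y
    rw [(hmem i x).mp hx, (hmem j y).mp hy] at h1
    simp only [map_smul, LinearMap.smul_apply, smul_eq_mul] at h1
    have h2 : ((i : ℂ) + (j : ℂ)) * killingForm ℂ g x y = 0 := by linear_combination h1
    have h3 : ((i : ℂ) + (j : ℂ)) ≠ 0 := by
      have : (((i + j : ℤ)) : ℂ) ≠ 0 := Int.cast_ne_zero.mpr hij
      push_cast at this
      exact this
    exact (mul_eq_zero.mp h2).resolve_left h3
  have hker : ∀ x : g, (∀ (j : ℤ), ∀ y ∈ adEig ξ j, killingForm ℂ g x y = 0)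
      → killingForm ℂ g x = 0 := by
    intro x hx
    have hle : (⊤ : Submodule ℂ g) ≤ LinearMap.ker (killingForm ℂ g x) := by
      rw [← hdiag]
      refine iSup_le fun j => ?_
      intro y hy
      exact LinearMap.mem_ker.mpr (hx j y hy)
    apply LinearMap.ext
    intro y
    simpa using hle (Submodule.mem_top : y ∈ (⊤ : Submodule ℂ g))
  -- disjointness with the zero eigenspace
  have hdisj : ∀ (Q : Finset ℤ), ((0 : ℤ) ∈ Q → False) → ∀ x : g, x ∈ adEig ξ 0
      → x ∈ (⨆ j ∈ Q, adEig ξ j : Submodule ℂ g) → x = 0 := by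
    intro Q hQ x h0 hQx
    have hEind : iSupIndep (Module.End.eigenspace (LieAlgebra.ad ℂ g ξ)) :=
      Module.End.eigenspaces_iSupIndep _
    have hle : (⨆ j ∈ Q, adEig ξ j : Submodule ℂ g)
        ≤ ⨆ ν : ℂ, ⨆ _ : ν ≠ ((0 : ℤ) : ℂ), Module.End.eigenspace (LieAlgebra.ad ℂ g ξ) ν := by
      refine iSup₂_le fun j hj => ?_
      have hj0 : (j : ℂ) ≠ ((0 : ℤ) : ℂ) := by
        intro h
        have : j = 0 := by exact_mod_cast h
        exact hQ (this ▸ hj)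
      exact le_iSup₂_of_le (j : ℂ) hj0 le_rfl
    have hd := (hEind ((0 : ℤ) : ℂ)).mono_right hle
    exact Submodule.disjoint_def.mp hd x h0 hQx
  -- nondegeneracy of the pairing between ubar and the positive part
  have hnd1 : ∀ x : g, x ∈ ubar
      → (∀ w ∈ (⨆ j : ℤ, ⨆ _ : 0 < j, adEig ξ j : Submodule ℂ g), killingForm ℂ g x w = 0)
      → x = 0 := by
    intro x hxubar hxw
    have hall : ∀ (j : ℤ), ∀ y ∈ adEig ξ j, killingForm ℂ g x y = 0 := by
      intro j y hy
      rcases le_or_gt j 0 with hj | hj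
      · have hle : ubar ≤ LinearMap.ker ((killingForm ℂ g).flip y) := by
          rw [hubardef]
          refine iSup₂_le fun i hi => ?_
          intro v hv
          have hi0 : i < 0 := (Finset.mem_filter.mp hi).2
          refine LinearMap.mem_ker.mpr ?_
          have := horth i j (by omega) v hv y hy
          simpa [LinearMap.flip_apply] using this
        have := hle hxubar
        simpa [LinearMap.flip_apply] using this
      · have hyu : y ∈ (⨆ j : ℤ, ⨆ _ : 0 < j, adEig ξ j : Submodule ℂ g) :=
          (le_iSup₂_of_le j hj le_rfl : adEig ξ j ≤ _) hy
        exact hxw y hyu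
    have hx0 : x ∈ adEig ξ 0 :=
      mem_adEig_zero_of_killingForm_eq_zero ξ hdiag (hker x hall)
    refine hdisj Ngf ?_ x hx0 hxubar
    intro h
    have := (Finset.mem_filter.mp h).2
    omega
  have hnd2 : ∀ w : g, w ∈ (⨆ j : ℤ, ⨆ _ : 0 < j, adEig ξ j : Submodule ℂ g)
      → (∀ x ∈ ubar, killingForm ℂ g x w = 0) → w = 0 := by
    intro w hwu hw
    have hall : ∀ (j : ℤ), ∀ y ∈ adEig ξ j, killingForm ℂ g w y = 0 := by
      intro j y hy
      rcases le_or_gt 0 j with hj | hj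
      · have hle : (⨆ j : ℤ, ⨆ _ : 0 < j, adEig ξ j : Submodule ℂ g)
            ≤ LinearMap.ker ((killingForm ℂ g).flip y) := by
          refine iSup₂_le fun i hi => ?_
          intro v hv
          refine LinearMap.mem_ker.mpr ?_
          have := horth i j (by omega) v hv y hy
          simpa [LinearMap.flip_apply] using this
        have := hle hwu
        simpa [LinearMap.flip_apply] using this
      · by_cases hjb : adEig ξ j = ⊥
        · rw [hjb] at hy
          have : y = 0 := by simpa using hy
          rw [this, map_zero]
        · have hyubar : y ∈ ubar := by
            rw [hubardef]
            refine (le_iSup₂_of_le j ?_ le_rfl : adEig ξ j ≤ _) hy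
            rw [hNgfdef, Finset.mem_filter]
            exact ⟨by rwa [hsfin, Set.Finite.mem_toFinset], hj⟩
          rw [LieModule.traceForm_comm]
          exact hw y hyubar
    have hw0 : w ∈ adEig ξ 0 :=
      mem_adEig_zero_of_killingForm_eq_zero ξ hdiag (hker w hall)
    have hwP : w ∈ (⨆ j ∈ Pf, adEig ξ j : Submodule ℂ g) := by
      rw [← hupP]
      exact hwu
    refine hdisj Pf ?_ w hw0 hwP
    intro h
    have := (Finset.mem_filter.mp h).2
    omega
  -- the pairing
  set upSub : Submodule ℂ g := ⨆ j : ℤ, ⨆ _ : 0 < j, adEig ξ j with hupSub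
  set B : ubar →ₗ[ℂ] (upSub →ₗ[ℂ] ℂ) :=
    ((killingForm ℂ g).compl₂ upSub.subtype).domRestrict ubar with hB
  have hBapp : ∀ (v : ubar) (w : upSub), B v w = killingForm ℂ g (v : g) (w : g) :=
    fun v w => rfl
  have hS : Set.MapsTo (LieAlgebra.ad ℂ g b ∘ₗ LieAlgebra.ad ℂ g a) upSub upSub :=
    fun x hx => hlu b hb _ (hlu a ha x hx)
  have hkey : trace ℂ ubar (T.restrict hTubar)
      = trace ℂ upSub ((LieAlgebra.ad ℂ g b ∘ₗ LieAlgebra.ad ℂ g a).restrict hS) := by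
    apply trace_eq_trace_of_dual_pair B
    · intro v hv
      refine Subtype.ext (hnd1 (v : g) v.2 ?_)
      intro w hw
      have := hv ⟨w, hw⟩
      rwa [hBapp] at this
    · intro w hw
      refine Subtype.ext (hnd2 (w : g) w.2 ?_)
      intro x hx
      have := hw ⟨x, hx⟩
      rwa [hBapp] at this
    · intro v w
      rw [hBapp, hBapp]
      have hL : ((T.restrict hTubar v : ubar) : g) = ⁅a, ⁅b, (v : g)⁆⁆ := by
        simp [hTdef, LinearMap.restrict_coe_apply, LieAlgebra.ad_apply]
      have hR : (((LieAlgebra.ad ℂ g b ∘ₗ LieAlgebra.ad ℂ g a).restrict hS w : upSub) : g)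
          = ⁅b, ⁅a, (w : g)⁆⁆ := by
        rfl
      rw [hL, hR]
      have h1 : killingForm ℂ g ⁅a, ⁅b, (v : g)⁆⁆ (w : g)
          = - killingForm ℂ g ⁅b, (v : g)⁆ ⁅a, (w : g)⁆ :=
        LieModule.traceForm_apply_lie_apply' ℂ g g a ⁅b, (v : g)⁆ (w : g)
      have h2 : killingForm ℂ g ⁅b, (v : g)⁆ ⁅a, (w : g)⁆
          = - killingForm ℂ g (v : g) ⁅b, ⁅a, (w : g)⁆⁆ :=
        LieModule.traceForm_apply_lie_apply' ℂ g g b (v : g) ⁅a, (w : g)⁆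
      rw [h1, h2, neg_neg]
  have ha' : Set.MapsTo (LieAlgebra.ad ℂ g a) upSub upSub := fun x hx => hlu a ha x hx
  have hb' : Set.MapsTo (LieAlgebra.ad ℂ g b) upSub upSub := fun x hx => hlu b hb x hx
  have hswap : trace ℂ upSub ((LieAlgebra.ad ℂ g b ∘ₗ LieAlgebra.ad ℂ g a).restrict hS)
      = trace ℂ upSub (T.restrict hTu) := by
    have h1 : (LieAlgebra.ad ℂ g b ∘ₗ LieAlgebra.ad ℂ g a).restrict hS
        = ((LieAlgebra.ad ℂ g b).restrict hb') ∘ₗ ((LieAlgebra.ad ℂ g a).restrict ha') :=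
      LinearMap.restrict_comp ha' hb' hS
    have h2 : T.restrict hTu
        = ((LieAlgebra.ad ℂ g a).restrict ha') ∘ₗ ((LieAlgebra.ad ℂ g b).restrict hb') :=
      LinearMap.restrict_comp hb' ha' hTu
    rw [h1, h2, ← Module.End.mul_eq_comp, ← Module.End.mul_eq_comp]
    exact LinearMap.trace_mul_comm ℂ _ _
  -- assemble everything
  have hX : trace ℂ upSub (T.restrict hTu)
      = traceOn upSub T (fun x hx => hlu a ha _ (hlu b hb x hx)) := rfl
  calc killingForm ℂ g a b
      = ∑ j ∈ sfin, τ j := hstep1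
    _ = ∑ j ∈ Pf, τ j + (∑ j ∈ Ngf, τ j + ∑ j ∈ sfin.filter (fun j => j = 0), τ j) := by
        rw [e1, e2, e3, e4]
    _ = trace ℂ upSub (T.restrict hTu) + (trace ℂ upSub (T.restrict hTu)
          + traceOn (adEig ξ 0) T (fun x hx => hll a ha _ (hll b hb x hx))) := by
        rw [← epos, eneg, hkey, hswap, ezero]
    _ = 2 * traceOn upSub T (fun x hx => hlu a ha _ (hlu b hb x hx))
          + traceOn (adEig ξ 0) T (fun x hx => hll a ha _ (hll b hb x hx)) := by
        rw [hX]
        ring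
end

section
/- Assume 𝔤 is semisimple. Then for all a, b in the centre of 𝔩 (i.e. a,b ∈ 𝔩 with ⁅a,x⁆ = 0 and ⁅b,x⁆ = 0 for all x ∈ 𝔩): κ_𝔤(a,b) = 2·tr_𝔲(ad(a)∘ad(b)). Consequently, for every 𝔤-invariant symmetric bilinear form κ₀ on 𝔤 and every k, h∨ ∈ ℂ with κ_𝔤 = 2h∨·κ₀, one has k·κ₀(a,b) + tr_𝔲(ad(a)∘ad(b)) = (k + h∨)·κ₀(a,b) for all such a, b; that is, (k·κ₀ − κ_c^𝔭) restricted to the centre of 𝔩 equals (k + h∨)·κ₀. -/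
open Module LinearMap

namespace KillingAux
set_option linter.unusedSectionVars false
set_option maxHeartbeats 1600000

variable {g : Type*} [LieRing g] [LieAlgebra ℂ g] [FiniteDimensional ℂ g]

lemma mem_adEig {ξ x : g} {j : ℤ} : x ∈ adEig ξ j ↔ ⁅ξ, x⁆ = (j : ℂ) • x := by
  rw [adEig, Module.End.mem_eigenspace_iff, LieAlgebra.ad_apply]

lemma adEig_indep (ξ : g) : iSupIndep (adEig ξ) :=
  (Module.End.eigenspaces_iSupIndep (LieAlgebra.ad ℂ g ξ)).comp
    (fun _ _ h => Int.cast_injective h)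

lemma mapsTo_ad (ξ : g) {a : g} (ha : a ∈ adEig ξ 0) (j : ℤ) :
    Set.MapsTo (LieAlgebra.ad ℂ g a) (adEig ξ j) (adEig ξ j) := by
  intro x hx
  rw [SetLike.mem_coe] at hx ⊢
  rw [mem_adEig] at ha hx ⊢
  rw [LieAlgebra.ad_apply, leibniz_lie, hx, ha]
  simp

lemma ortho (ξ : g) {i j : ℤ} (hij : i + j ≠ 0) {x y : g}
    (hx : x ∈ adEig ξ i) (hy : y ∈ adEig ξ j) : killingForm ℂ g x y = 0 := by
  have h := LieModule.traceForm_apply_lie_apply' ℂ g g ξ x y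
  rw [mem_adEig] at hx hy
  rw [hx, hy, map_smul, map_smul] at h
  simp only [LinearMap.smul_apply, smul_eq_mul] at h
  have h2 : ((i : ℂ) + (j : ℂ)) * killingForm ℂ g x y = 0 := by
    linear_combination h
  rcases mul_eq_zero.mp h2 with h3 | h3
  · exact absurd (by exact_mod_cast h3 : ((i + j : ℤ) : ℂ) = 0)
      (by exact_mod_cast hij)
  · exact h3

lemma eigen_int (ξ : g) (hdiag : ⨆ j : ℤ, adEig ξ j = ⊤) {μ : ℂ}
    (h : Module.End.eigenspace (LieAlgebra.ad ℂ g ξ) μ ≠ ⊥) : ∃ j : ℤ, μ = (j : ℂ) := by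
  by_contra hc
  push_neg at hc
  apply h
  have hd := (Module.End.eigenspaces_iSupIndep (LieAlgebra.ad ℂ g ξ)) μ
  have hle : Module.End.eigenspace (LieAlgebra.ad ℂ g ξ) μ ≤
      ⨆ ν, ⨆ _ : ν ≠ μ, Module.End.eigenspace (LieAlgebra.ad ℂ g ξ) ν := by
    refine le_trans le_top ?_
    rw [← hdiag]
    refine iSup_le fun j => ?_
    exact le_iSup_of_le ((j : ℂ)) (le_iSup_of_le (fun hh => hc j hh.symm) le_rfl)
  exact hd.eq_bot_of_le hle

lemma killing_eq_zero_of_forall (ξ : g) (hdiag : ⨆ j : ℤ, adEig ξ j = ⊤) {x : g}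
    (h : ∀ (j : ℤ), ∀ y ∈ adEig ξ j, killingForm ℂ g x y = 0) (y : g) :
    killingForm ℂ g x y = 0 := by
  have hy : y ∈ ⨆ j : ℤ, adEig ξ j := hdiag ▸ Submodule.mem_top
  refine Submodule.iSup_induction (motive := fun z => killingForm ℂ g x z = 0) _ hy (fun j z hz => h j z hz) (map_zero _) ?_
  intro u v hu hv
  rw [map_add, hu, hv, add_zero]

lemma ker_killing_le_adEig_zero [LieAlgebra.IsSemisimple ℂ g] (ξ : g)
    (hdiag : ⨆ j : ℤ, adEig ξ j = ⊤) {x : g} (hx : ∀ y : g, killingForm ℂ g x y = 0) :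
    x ∈ adEig ξ 0 := by
  classical
  set I : LieIdeal ℂ g := LieIdeal.killingCompl ℂ g ⊤ with hIdef
  have hmemI : ∀ z : g, z ∈ I ↔ ∀ y : g, killingForm ℂ g z y = 0 := by
    intro z
    rw [hIdef, LieIdeal.mem_killingCompl]
    constructor
    · intro h y
      rw [LieModule.traceForm_comm]
      exact h y trivial
    · intro h y _
      rw [LieModule.traceForm_comm]
      exact h y
  set J : LieIdeal ℂ g := Iᶜ with hJdef
  have hinf : I ⊓ J = ⊥ := by rw [hJdef]; exact inf_compl_eq_bot
  have hsup : I ⊔ J = ⊤ := by rw [hJdef]; exact sup_compl_eq_top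
  -- brackets between I and J vanish
  have hbr : ∀ p ∈ I, ∀ q ∈ J, ⁅p, q⁆ = (0 : g) := by
    intro p hp q hq
    have h1 : ⁅p, q⁆ ∈ I := by
      have : ⁅q, p⁆ ∈ I := I.lie_mem hp
      have h2 : (-⁅q, p⁆ : g) ∈ I := neg_mem this
      rwa [lie_skew] at h2
    have h2 : ⁅p, q⁆ ∈ J := J.lie_mem hq
    have : ⁅p, q⁆ ∈ I ⊓ J := ⟨h1, h2⟩
    rwa [hinf, LieSubmodule.mem_bot] at this
  -- decompose ξ
  obtain ⟨ζ, hζ, ζ', hζ', hsum⟩ : ∃ y ∈ I, ∃ z ∈ J, y + z = ξ := by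
    rw [← LieSubmodule.mem_sup, hsup]
    trivial
  set D : Module.End ℂ g := LieAlgebra.ad ℂ g ζ with hDdef
  have hDJ : ∀ q ∈ J, D q = 0 := fun q hq => hbr ζ hζ q hq
  have hDI : ∀ p ∈ I, D p = ⁅ξ, p⁆ := by
    intro p hp
    have : ⁅ζ', p⁆ = 0 := by
      have h2 := hbr p hp ζ' hζ'
      rw [← lie_skew, h2, neg_zero]
    rw [← hsum, add_lie, this, add_zero]
    rfl
  -- nonzero eigenvalues of D are eigenvalues of ad ξ
  have heig : ∀ μ : ℂ, μ ≠ 0 →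
      Module.End.eigenspace D μ ≤ Module.End.eigenspace (LieAlgebra.ad ℂ g ξ) μ := by
    intro μ hμ y hy
    rw [Module.End.mem_eigenspace_iff] at hy ⊢
    have hyI : y ∈ I := by
      have hDy : D y ∈ I := by
        have : ⁅y, ζ⁆ ∈ I := I.lie_mem hζ
        have h2 : (-⁅y, ζ⁆ : g) ∈ I := neg_mem this
        rwa [lie_skew] at h2
      have : y = μ⁻¹ • D y := by
        rw [hy, smul_smul, inv_mul_cancel₀ hμ, one_smul]
      rw [this]
      exact I.smul_mem _ hDy
    rw [LieAlgebra.ad_apply, ← hDI y hyI, hy]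
  -- D is diagonalizable
  have hDdiag : ⨆ μ : ℂ, Module.End.eigenspace D μ = ⊤ := by
    rw [eq_top_iff]
    have hsup' : (LieSubmodule.toSubmodule I) ⊔ (LieSubmodule.toSubmodule J) = ⊤ := by
      rw [← LieSubmodule.sup_toSubmodule, hsup, LieSubmodule.top_toSubmodule]
    rw [← hsup']
    refine sup_le ?_ ?_
    · -- I is spanned by eigenvectors of D
      have hmapI : ∀ y ∈ (LieSubmodule.toSubmodule I), (LieAlgebra.ad ℂ g ξ) y ∈ (LieSubmodule.toSubmodule I) := by
        intro y hy
        exact I.lie_mem hy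
      have htop : ⨆ μ : ℂ, (LieAlgebra.ad ℂ g ξ).genEigenspace μ 1 = ⊤ := by
        rw [eq_top_iff, ← hdiag]
        exact iSup_le fun j => le_iSup_of_le ((j : ℂ)) le_rfl
      have hrest := Module.End.genEigenspace_restrict_eq_top (k := 1) hmapI htop
      intro y hy
      have hmem : (⟨y, hy⟩ : (LieSubmodule.toSubmodule I)) ∈
          ⨆ μ : ℂ, Module.End.genEigenspace (LinearMap.restrict _ hmapI) μ 1 := by
        rw [hrest]; trivial
      refine Submodule.iSup_induction
        (motive := fun z : (LieSubmodule.toSubmodule I) => (z : g) ∈ ⨆ μ : ℂ, Module.End.eigenspace D μ)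
        _ hmem (fun μ z hz => ?_) (by simp) (fun u v hu hv => by
          rw [Submodule.coe_add]
          exact Submodule.add_mem _ hu hv)
      · refine Submodule.mem_iSup_of_mem μ ?_
        rw [Module.End.mem_eigenspace_iff]
        have hz' : (LieAlgebra.ad ℂ g ξ) (z : g) = μ • (z : g) := by
          have h1 : (LinearMap.restrict (LieAlgebra.ad ℂ g ξ) hmapI) z = μ • z :=
            Module.End.mem_eigenspace_iff.mp hz
          have h2 := congrArg (Subtype.val) h1
          simpa [LinearMap.restrict_apply] using h2
        rw [hDI _ z.2, ← LieAlgebra.ad_apply (R := ℂ), hz']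
    · -- J is in the kernel of D
      intro y hy
      refine Submodule.mem_iSup_of_mem (0 : ℂ) ?_
      rw [Module.End.mem_eigenspace_iff, zero_smul]
      exact hDJ y hy
  -- trace of D ∘ D is zero
  have htr : LinearMap.trace ℂ g (D ∘ₗ D) = 0 := by
    have : killingForm ℂ g ζ ζ = 0 := (hmemI ζ).mp hζ ζ
    rwa [killingForm_apply_apply] at this
  -- eigenspaces of D for nonzero eigenvalues vanish
  have hDindep := Module.End.eigenspaces_iSupIndep D
  have hDint := DirectSum.isInternal_submodule_of_iSupIndep_of_iSup_eq_top hDindep hDdiag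
  have hDfin : {μ : ℂ | Module.End.eigenspace D μ ≠ ⊥}.Finite :=
    WellFoundedGT.finite_ne_bot_of_iSupIndep hDindep
  have hmaps : ∀ μ : ℂ, Set.MapsTo (D ∘ₗ D) (Module.End.eigenspace D μ)
      (Module.End.eigenspace D μ) := by
    intro μ z hz
    rw [SetLike.mem_coe, Module.End.mem_eigenspace_iff] at hz ⊢
    simp only [LinearMap.comp_apply, hz, map_smul]
  have hres : ∀ μ : ℂ, (D ∘ₗ D).restrict (hmaps μ) = (μ * μ) • LinearMap.id := by
    intro μ
    ext z
    have hz := Module.End.mem_eigenspace_iff.mp z.2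
    change (D ∘ₗ D) (z : g) = _
    simp only [LinearMap.comp_apply, LinearMap.smul_apply, LinearMap.id_apply,
      SetLike.val_smul]
    rw [hz, map_smul, hz, smul_smul]
  have hsum0 : ∑ μ ∈ hDfin.toFinset,
      (μ * μ) * (finrank ℂ (Module.End.eigenspace D μ) : ℂ) = 0 := by
    rw [← htr, LinearMap.trace_eq_sum_trace_restrict' hDint hDfin hmaps]
    refine Finset.sum_congr rfl fun μ _ => ?_
    rw [hres μ, map_smul, LinearMap.trace_id, smul_eq_mul]
  -- all eigenvalues are zero
  have hall0 : ∀ μ ∈ hDfin.toFinset, μ = 0 := by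
    have hterm : ∀ μ ∈ hDfin.toFinset, ∃ n : ℕ,
        (μ * μ) * (finrank ℂ (Module.End.eigenspace D μ) : ℂ) = (n : ℂ) ∧ (n = 0 → μ = 0) := by
      intro μ hμS
      by_cases hμ : μ = 0
      · exact ⟨0, by simp [hμ], fun _ => hμ⟩
      · have hne : Module.End.eigenspace D μ ≠ ⊥ := by
          simpa using (Set.Finite.mem_toFinset hDfin).mp hμS
        have hEμ : Module.End.eigenspace (LieAlgebra.ad ℂ g ξ) μ ≠ ⊥ := by
          intro hb
          exact hne (eq_bot_iff.mpr (hb ▸ heig μ hμ))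
        obtain ⟨j, rfl⟩ := eigen_int ξ hdiag hEμ
        have hj : j ≠ 0 := by
          intro h0; apply hμ; rw [h0]; norm_num
        have hd : 0 < finrank ℂ (Module.End.eigenspace D (j : ℂ)) := by
          have : Nontrivial (Module.End.eigenspace D (j : ℂ)) :=
            Submodule.nontrivial_iff_ne_bot.mpr hne
          exact Module.finrank_pos
        refine ⟨(j ^ 2).toNat * finrank ℂ (Module.End.eigenspace D (j : ℂ)), ?_, ?_⟩
        · have h3 : (((j ^ 2).toNat : ℕ) : ℂ) = ((j : ℂ)) ^ 2 := by
            have h2 : ((j ^ 2).toNat : ℤ) = j ^ 2 := Int.toNat_of_nonneg (sq_nonneg j)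
            calc (((j ^ 2).toNat : ℕ) : ℂ) = (((j ^ 2).toNat : ℤ) : ℂ) := by push_cast; ring
              _ = ((j ^ 2 : ℤ) : ℂ) := by rw [h2]
              _ = ((j : ℂ)) ^ 2 := by push_cast; ring
          rw [Nat.cast_mul, h3]
          ring
        · intro h0
          rcases Nat.mul_eq_zero.mp h0 with h | h
          · exfalso
            have : (0 : ℤ) < j ^ 2 := by positivity
            omega
          · exact absurd h hd.ne'
    intro μ hμ
    choose n hn1 hn2 using hterm
    have hcast : ((∑ μ ∈ hDfin.toFinset.attach, n μ.1 μ.2 : ℕ) : ℂ) = 0 := by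
      push_cast
      rw [← hsum0, ← Finset.sum_attach hDfin.toFinset
        (fun μ => (μ * μ) * (finrank ℂ (Module.End.eigenspace D μ) : ℂ))]
      exact Finset.sum_congr rfl fun z _ => (hn1 z.1 z.2).symm
    have hzero : ∑ μ ∈ hDfin.toFinset.attach, n μ.1 μ.2 = 0 := by exact_mod_cast hcast
    have := Finset.sum_eq_zero_iff.mp hzero ⟨μ, hμ⟩ (Finset.mem_attach _ _)
    exact hn2 μ hμ this
  -- hence D = 0 on all of g, in particular ⁅ξ, x⁆ = 0
  have hD0 : ∀ y : g, D y = 0 := by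
    have hle : (⊤ : Submodule ℂ g) ≤ Module.End.eigenspace D 0 := by
      rw [← hDdiag]
      refine iSup_le fun μ => ?_
      by_cases hμ : Module.End.eigenspace D μ = ⊥
      · rw [hμ]; exact bot_le
      · have : μ = 0 := hall0 μ ((Set.Finite.mem_toFinset hDfin).mpr hμ)
        rw [this]
    intro y
    have := hle (Submodule.mem_top : y ∈ ⊤)
    rw [Module.End.mem_eigenspace_iff, zero_smul] at this
    exact this
  have hxI : x ∈ I := (hmemI x).mpr hx
  rw [mem_adEig]
  rw [← hDI x hxI, hD0 x]
  norm_num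

lemma eq_zero_of_ortho [LieAlgebra.IsSemisimple ℂ g] (ξ : g)
    (hdiag : ⨆ j : ℤ, adEig ξ j = ⊤) {i : ℤ} (hi : i ≠ 0) {x : g} (hxi : x ∈ adEig ξ i)
    (hxy : ∀ y ∈ adEig ξ (-i), killingForm ℂ g x y = 0) : x = 0 := by
  have hall : ∀ y, killingForm ℂ g x y = 0 := by
    refine killing_eq_zero_of_forall ξ hdiag (fun m y hy => ?_)
    by_cases hmi : m = -i
    · exact hxy y (hmi ▸ hy)
    · exact ortho ξ (show i + m ≠ 0 by omega) hxi hy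
  have hx0 : x ∈ adEig ξ 0 := ker_killing_le_adEig_zero ξ hdiag hall
  have hdisj : Disjoint (adEig ξ i) (adEig ξ 0) :=
    ((adEig_indep ξ).pairwiseDisjoint) hi
  exact (Submodule.disjoint_def.mp hdisj) x hxi hx0

lemma trace_restrict_neg_eq [LieAlgebra.IsSemisimple ℂ g] (ξ : g)
    (hdiag : ⨆ j : ℤ, adEig ξ j = ⊤) {F : g →ₗ[ℂ] g}
    (hF : ∀ i : ℤ, Set.MapsTo F (adEig ξ i) (adEig ξ i))
    (hinv : ∀ x y : g, killingForm ℂ g (F x) y = killingForm ℂ g x (F y))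
    (j : ℤ) (hj : j ≠ 0) :
    LinearMap.trace ℂ (adEig ξ (-j)) (F.restrict (hF (-j)))
      = LinearMap.trace ℂ (adEig ξ j) (F.restrict (hF j)) := by
  classical
  set κ := killingForm ℂ g with hκ
  set Wm := adEig ξ (-j) with hWm
  set Wp := adEig ξ j with hWp
  set Φ : Wm →ₗ[ℂ] Module.Dual ℂ Wp := (κ.compl₂ Wp.subtype).comp Wm.subtype with hΦ
  have hΦapp : ∀ (x : Wm) (y : Wp), Φ x y = κ x.1 y.1 := fun _ _ => rfl
  have injΦ : Function.Injective Φ := by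
    rw [← LinearMap.ker_eq_bot, Submodule.eq_bot_iff]
    intro x hx0
    rw [LinearMap.mem_ker] at hx0
    have hx1 : x.1 = 0 := by
      refine eq_zero_of_ortho ξ hdiag (show -j ≠ 0 by omega) x.2 (fun y hy => ?_)
      have := congrFun (congrArg DFunLike.coe hx0) ⟨y, by rwa [neg_neg] at hy⟩
      simpa [hΦapp] using this
    exact Subtype.ext hx1
  set Ψ : Wp →ₗ[ℂ] Module.Dual ℂ Wm := (κ.compl₂ Wm.subtype).comp Wp.subtype with hΨ
  have injΨ : Function.Injective Ψ := by
    rw [← LinearMap.ker_eq_bot, Submodule.eq_bot_iff]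
    intro x hx0
    rw [LinearMap.mem_ker] at hx0
    have hx1 : x.1 = 0 := by
      refine eq_zero_of_ortho ξ hdiag hj x.2 (fun y hy => ?_)
      have := congrFun (congrArg DFunLike.coe hx0) ⟨y, hy⟩
      exact this
    exact Subtype.ext hx1
  have h1 : finrank ℂ Wm ≤ finrank ℂ (Module.Dual ℂ Wp) :=
    LinearMap.finrank_le_finrank_of_injective injΦ
  have h2 : finrank ℂ Wp ≤ finrank ℂ (Module.Dual ℂ Wm) :=
    LinearMap.finrank_le_finrank_of_injective injΨ
  have hdm : finrank ℂ (Module.Dual ℂ Wm) = finrank ℂ Wm := Subspace.dual_finrank_eq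
  have hdp : finrank ℂ (Module.Dual ℂ Wp) = finrank ℂ Wp := Subspace.dual_finrank_eq
  have hrk : finrank ℂ Wm = finrank ℂ (Module.Dual ℂ Wp) := by omega
  have surjΦ : Function.Surjective Φ :=
    (LinearMap.injective_iff_surjective_of_finrank_eq_finrank hrk).mp injΦ
  set e : Wm ≃ₗ[ℂ] Module.Dual ℂ Wp := LinearEquiv.ofBijective Φ ⟨injΦ, surjΦ⟩ with he
  set fm := F.restrict (hF (-j)) with hfm
  set fp := F.restrict (hF j) with hfp
  have hkey : ∀ x : Wm, Φ (fm x) = (Module.Dual.transpose (R := ℂ) fp) (Φ x) := by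
    intro x
    ext y
    show κ (F x.1) y.1 = κ x.1 (F y.1)
    exact hinv x.1 y.1
  have hconj : e.conj fm = Module.Dual.transpose (R := ℂ) fp := by
    apply LinearMap.ext
    intro φ
    obtain ⟨x, rfl⟩ := e.surjective φ
    rw [LinearEquiv.conj_apply]
    simp only [LinearMap.comp_apply, LinearEquiv.coe_coe, LinearEquiv.symm_apply_apply]
    have hex : ∀ z : Wm, e z = Φ z := fun _ => rfl
    rw [hex, hex, hkey]
  calc LinearMap.trace ℂ Wm fm
      = LinearMap.trace ℂ (Module.Dual ℂ Wp) (e.conj fm) := (LinearMap.trace_conj' fm e).symm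
    _ = LinearMap.trace ℂ (Module.Dual ℂ Wp) (Module.Dual.transpose (R := ℂ) fp) := by
        rw [hconj]
    _ = LinearMap.trace ℂ Wp fp := LinearMap.trace_transpose' fp

end KillingAux

open KillingAux in
/-- for `a, b` in the centre of the Levi subalgebra `𝔩 = 𝔤₀`,
`κ_𝔤(a,b) = 2·tr_𝔲(ad a ∘ ad b)`; consequently for every invariant symmetric `κ₀` with
`κ_𝔤 = 2h∨·κ₀` one has `k·κ₀(a,b) + tr_𝔲(ad a ad b) = (k + h∨)·κ₀(a,b)`. -/
theorem killingForm_eq_two_trace_nilrad_on_center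
    (g : Type*) [LieRing g] [LieAlgebra ℂ g] [FiniteDimensional ℂ g]
    [LieAlgebra.IsSemisimple ℂ g]
    (ξ : g)
    (hdiag : ⨆ j : ℤ, adEig ξ j = ⊤)
    (l u : Submodule ℂ g)
    (hl : l = adEig ξ 0)
    (hu : u = ⨆ j : ℤ, ⨆ _ : 0 < j, adEig ξ j)
    (hll : ∀ a ∈ l, ∀ x ∈ l, ⁅a, x⁆ ∈ l)
    (hlu : ∀ a ∈ l, ∀ x ∈ u, ⁅a, x⁆ ∈ u)
    (a b : g) (ha : a ∈ l) (hb : b ∈ l)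
    (haz : ∀ x ∈ l, ⁅a, x⁆ = 0) (hbz : ∀ x ∈ l, ⁅b, x⁆ = 0) :
    killingForm ℂ g a b
      = 2 * traceOn u ((LieAlgebra.ad ℂ g a) ∘ₗ (LieAlgebra.ad ℂ g b))
            (fun x hx => hlu a ha _ (hlu b hb x hx))
    ∧ ∀ (κ₀ : LinearMap.BilinForm ℂ g),
        (∀ x y : g, κ₀ x y = κ₀ y x) →
        (∀ c x y : g, κ₀ ⁅c, x⁆ y + κ₀ x ⁅c, y⁆ = 0) →
        ∀ k hV : ℂ, (∀ x y : g, killingForm ℂ g x y = 2 * hV * κ₀ x y) →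
          k * κ₀ a b
              + traceOn u ((LieAlgebra.ad ℂ g a) ∘ₗ (LieAlgebra.ad ℂ g b))
                  (fun x hx => hlu a ha _ (hlu b hb x hx))
            = (k + hV) * κ₀ a b := by
  classical
  have ha0 : a ∈ adEig ξ 0 := hl ▸ ha
  have hb0 : b ∈ adEig ξ 0 := hl ▸ hb
  have hab : ⁅a, b⁆ = 0 := haz b hb
  set F : g →ₗ[ℂ] g := (LieAlgebra.ad ℂ g a) ∘ₗ (LieAlgebra.ad ℂ g b) with hFdef
  have hmaps : ∀ i : ℤ, Set.MapsTo F (adEig ξ i) (adEig ξ i) :=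
    fun i x hx => mapsTo_ad ξ ha0 i (mapsTo_ad ξ hb0 i hx)
  have hinv : ∀ x y : g, killingForm ℂ g (F x) y = killingForm ℂ g x (F y) := by
    intro x y
    have h1 : killingForm ℂ g ⁅a, ⁅b, x⁆⁆ y = - killingForm ℂ g ⁅b, x⁆ ⁅a, y⁆ :=
      LieModule.traceForm_apply_lie_apply' ℂ g g a ⁅b, x⁆ y
    have h2 : killingForm ℂ g ⁅b, x⁆ ⁅a, y⁆ = - killingForm ℂ g x ⁅b, ⁅a, y⁆⁆ :=
      LieModule.traceForm_apply_lie_apply' ℂ g g b x ⁅a, y⁆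
    have h3 : ⁅a, ⁅b, y⁆⁆ = ⁅b, ⁅a, y⁆⁆ := by
      rw [leibniz_lie a b y, hab, zero_lie, zero_add]
    show killingForm ℂ g ⁅a, ⁅b, x⁆⁆ y = killingForm ℂ g x ⁅a, ⁅b, y⁆⁆
    rw [h1, h2, neg_neg, h3]
  have hindep := adEig_indep ξ
  have hint := DirectSum.isInternal_submodule_of_iSupIndep_of_iSup_eq_top hindep hdiag
  have hfin : {i : ℤ | adEig ξ i ≠ ⊥}.Finite :=
    WellFoundedGT.finite_ne_bot_of_iSupIndep hindep
  set t : ℤ → ℂ := fun i => LinearMap.trace ℂ (adEig ξ i) (F.restrict (hmaps i)) with ht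
  set s0 : Finset ℤ := hfin.toFinset with hs0
  set s : Finset ℤ := s0 ∪ s0.image (fun i => -i) with hs
  have hss : ∀ i ∈ s, -i ∈ s := by
    intro i hi
    rcases Finset.mem_union.mp hi with h | h
    · exact Finset.mem_union_right _ (Finset.mem_image.mpr ⟨i, h, rfl⟩)
    · obtain ⟨i', hi', rfl⟩ := Finset.mem_image.mp h
      rw [neg_neg]
      exact Finset.mem_union_left _ hi'
  have hsub0 : ∀ i : ℤ, i ∉ s0 → adEig ξ i = ⊥ := by
    intro i hi
    by_contra h
    exact hi (hfin.mem_toFinset.mpr h)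
  have h_t0 : t 0 = 0 := by
    have hz : F.restrict (hmaps 0) = 0 := by
      ext z
      have hzl : (z : g) ∈ l := by rw [hl]; exact z.2
      have hFz : F (z : g) = 0 := by
        show ⁅a, ⁅b, (z : g)⁆⁆ = 0
        exact haz _ (hll b hb _ hzl)
      change F (z : g) = _
      rw [hFz]
      simp
    rw [ht]
    simp only [hz, map_zero]
  have h_tneg : ∀ i : ℤ, i ≠ 0 → t (-i) = t i :=
    fun i hi => trace_restrict_neg_eq ξ hdiag hmaps hinv i hi
  have h_bot_zero : ∀ i : ℤ, adEig ξ i = ⊥ → t i = 0 := by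
    intro i hEi
    haveI : Subsingleton (adEig ξ i) := by rw [hEi]; infer_instance
    have hz : F.restrict (hmaps i) = 0 := Subsingleton.elim _ _
    rw [ht]
    simp only [hz, map_zero]
  have h_killing : killingForm ℂ g a b = ∑ i ∈ s, t i := by
    rw [killingForm_apply_apply, ← hFdef,
      LinearMap.trace_eq_sum_trace_restrict' hint hfin hmaps]
    exact Finset.sum_subset Finset.subset_union_left
      (fun i _ hi => h_bot_zero i (hsub0 i hi))
  -- trace on u
  have hpu : u = ⨆ i ∈ s.filter (fun i => 0 < i), adEig ξ i := by
    rw [hu]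
    apply le_antisymm
    · refine iSup_le fun i => iSup_le fun hi => ?_
      by_cases hEi : adEig ξ i = ⊥
      · rw [hEi]; exact bot_le
      · have his : i ∈ s.filter (fun i => 0 < i) :=
          Finset.mem_filter.mpr
            ⟨Finset.mem_union_left _ (hfin.mem_toFinset.mpr hEi), hi⟩
        exact le_biSup _ his
    · refine iSup_le fun i => iSup_le fun hi => ?_
      have h0i : 0 < i := (Finset.mem_filter.mp hi).2
      exact le_iSup_of_le i (le_iSup_of_le h0i le_rfl)
  have hindep' : iSupIndep (fun i : (s.filter (fun i => 0 < i) : Finset ℤ) => adEig ξ (i : ℤ)) :=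
    hindep.comp Subtype.val_injective
  have h_u : traceOn u F (fun x hx => hlu a ha _ (hlu b hb x hx))
      = ∑ i ∈ s.filter (fun i => 0 < i), t i := by
    have hmt : Set.MapsTo F u u := hpu ▸ LinearMap.mapsTo_biSup_of_mapsTo _ hmaps
    have := LinearMap.trace_eq_sum_trace_restrict_of_eq_biSup
      (s.filter (fun i => 0 < i)) hindep' hmaps u hpu hmt
    calc traceOn u F (fun x hx => hlu a ha _ (hlu b hb x hx))
        = LinearMap.trace ℂ u (F.restrict hmt) := rfl
      _ = _ := this
  -- sum splitting
  have hneg_sum : ∑ i ∈ s.filter (fun i => ¬ 0 < i), t i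
      = ∑ i ∈ s.filter (fun i => 0 < i), t i := by
    have hsub : ∑ i ∈ s.filter (fun i => ¬ 0 < i), t i
        = ∑ i ∈ s.filter (fun i => i < 0), t i := by
      refine (Finset.sum_subset ?_ ?_).symm
      · intro i hi
        rw [Finset.mem_filter] at hi ⊢
        exact ⟨hi.1, by omega⟩
      · intro i hi hni
        rw [Finset.mem_filter] at hi
        have : i = 0 := by
          by_contra hc
          exact hni (Finset.mem_filter.mpr ⟨hi.1, by omega⟩)
        rw [this]
        exact h_t0
    rw [hsub]
    refine Finset.sum_nbij' (fun i => -i) (fun i => -i) ?_ ?_ ?_ ?_ ?_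
    · intro i hi
      rw [Finset.mem_filter] at hi ⊢
      exact ⟨hss i hi.1, by omega⟩
    · intro i hi
      rw [Finset.mem_filter] at hi ⊢
      exact ⟨hss i hi.1, by omega⟩
    · intro i _; omega
    · intro i _; omega
    · intro i hi
      have hi0 : i ≠ 0 := by
        rw [Finset.mem_filter] at hi; omega
      rw [← h_tneg i hi0]
  have hsum : killingForm ℂ g a b = 2 * ∑ i ∈ s.filter (fun i => 0 < i), t i := by
    rw [h_killing, ← Finset.sum_filter_add_sum_filter_not s (fun i => 0 < i) t, hneg_sum]
    ring
  have part1 : killingForm ℂ g a b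
      = 2 * traceOn u F (fun x hx => hlu a ha _ (hlu b hb x hx)) := by
    rw [h_u, hsum]
  refine ⟨part1, ?_⟩
  intro κ₀ _ _ k hV hrel
  have hT : traceOn u F (fun x hx => hlu a ha _ (hlu b hb x hx)) = hV * κ₀ a b := by
    have h := hrel a b
    rw [part1] at h
    linear_combination h / 2
  rw [hT]
  ring
end

section
/- Let κ be a 𝔤-invariant symmetric bilinear form on 𝔤 and set κ* = −κ − κ_𝔤 (the dual form). Then the form κ − κ_c^𝔭 vanishes on ⁅𝔩,𝔩⁆ × ⁅𝔩,𝔩⁆ if and only if κ*(a,b) = −κ_{⁅𝔭,𝔭⁆}(a,b) for all a,b ∈ ⁅𝔭,𝔭⁆, where ⁅𝔭,𝔭⁆ is the derived subalgebra of 𝔭 and κ_{⁅𝔭,𝔭⁆} denotes the Killing form of the Lie algebra ⁅𝔭,𝔭⁆. -/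
open Module LinearMap

/-- `κ_c^𝔭(a,b) = −tr_{𝔤/𝔭}(ρ(a)∘ρ(b))`, where `ρ` is the action on the quotient `𝔤/𝔭`
induced by the adjoint action. -/
noncomputable def kappaC {g : Type*} [LieRing g] [LieAlgebra ℂ g]
    (p : Submodule ℂ g) (a b : g)
    (hA : p ≤ p.comap (LieAlgebra.ad ℂ g a))
    (hB : p ≤ p.comap (LieAlgebra.ad ℂ g b)) : ℂ :=
  - LinearMap.trace ℂ (g ⧸ p)
      ((Submodule.mapQ p p (LieAlgebra.ad ℂ g a) hA)
        ∘ₗ (Submodule.mapQ p p (LieAlgebra.ad ℂ g b) hB))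

lemma my_trace_restrict_add_mapQ {M : Type*} [AddCommGroup M] [Module ℂ M]
    [FiniteDimensional ℂ M] (p : Submodule ℂ M) (f : M →ₗ[ℂ] M)
    (hf : p ≤ p.comap f) :
    LinearMap.trace ℂ M f
      = LinearMap.trace ℂ p (f.restrict fun x hx => hf hx)
        + LinearMap.trace ℂ (M ⧸ p) (Submodule.mapQ p p f hf) := by
  obtain ⟨q, hq⟩ := Submodule.exists_isCompl p
  set π1 : M →ₗ[ℂ] p := p.projectionOnto q hq with hπ1
  set π2 : M →ₗ[ℂ] q := q.projectionOnto p hq.symm with hπ2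
  have hid : ∀ x : M, (π1 x : M) + (π2 x : M) = x :=
    fun x => Submodule.projection_add_projection_eq_self hq x
  have hdec : f = f ∘ₗ p.subtype ∘ₗ π1 + f ∘ₗ q.subtype ∘ₗ π2 := by
    ext x
    simp only [LinearMap.add_apply, LinearMap.comp_apply, Submodule.coe_subtype]
    rw [← map_add, hid]
  have h1 : LinearMap.trace ℂ M (f ∘ₗ p.subtype ∘ₗ π1)
      = LinearMap.trace ℂ p (f.restrict fun x hx => hf hx) := by
    rw [show f ∘ₗ p.subtype ∘ₗ π1 = (f ∘ₗ p.subtype) ∘ₗ π1 by rfl,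
      LinearMap.trace_comp_comm']
    congr 1
    ext x
    have hfx : f (x : M) ∈ p := hf x.2
    simp only [LinearMap.comp_apply, Submodule.coe_subtype, LinearMap.restrict_apply]
    rw [show f (x : M) = ((⟨f (x : M), hfx⟩ : p) : M) by rfl,
      hπ1, Submodule.projectionOnto_apply_left hq]
  have h2 : LinearMap.trace ℂ M (f ∘ₗ q.subtype ∘ₗ π2)
      = LinearMap.trace ℂ (M ⧸ p) (Submodule.mapQ p p f hf) := by
    rw [show f ∘ₗ q.subtype ∘ₗ π2 = (f ∘ₗ q.subtype) ∘ₗ π2 by rfl,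
      LinearMap.trace_comp_comm']
    set e : (M ⧸ p) ≃ₗ[ℂ] q := Submodule.quotientEquivOfIsCompl p q hq
    rw [← LinearMap.trace_conj' (π2 ∘ₗ f ∘ₗ q.subtype) e.symm]
    congr 1
    apply Submodule.linearMap_qext
    ext x
    simp only [LinearMap.comp_apply, Submodule.mkQ_apply, LinearEquiv.conj_apply_apply,
      Submodule.mapQ_apply]
    have he : e (Submodule.Quotient.mk x) = π2 x := by
      have : (Submodule.Quotient.mk x : M ⧸ p) = Submodule.Quotient.mk ((π2 x : M)) := by
        rw [Submodule.Quotient.eq]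
        have hx : x - (π2 x : M) = (π1 x : M) := by
          rw [sub_eq_iff_eq_add]; exact (hid x).symm
        rw [hx]; exact (π1 x).2
      rw [this]
      exact Submodule.quotientEquivOfIsCompl_apply_mk_coe hq (π2 x)
    rw [LinearEquiv.symm_symm, he, Submodule.quotientEquivOfIsCompl_symm_apply,
      Submodule.coe_subtype]
    rw [Submodule.Quotient.eq]
    have h3 : (π2 (f (π2 x : M)) : M) - f x
        = - ((π1 (f (π2 x : M)) : M) + f ((π1 x : M))) := by
      have e1 := hid (f (π2 x : M))
      have e2 : f x = f ((π1 x : M)) + f ((π2 x : M)) := by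
        rw [← map_add, hid]
      rw [e2, eq_sub_of_add_eq' e1]; abel
    rw [h3]
    exact neg_mem (add_mem (π1 _).2 (hf (π1 x).2))
  conv_lhs => rw [hdec]
  rw [map_add, h1, h2]

section Rho
variable {g : Type*} [LieRing g] [LieAlgebra ℂ g]

open Classical in
/-- action on the quotient, defined for all `a` (zero junk value outside `p`'s normalizer) -/
noncomputable def rho (p : Submodule ℂ g) (a : g) : (g ⧸ p) →ₗ[ℂ] g ⧸ p :=
  if h : p ≤ p.comap (LieAlgebra.ad ℂ g a) then Submodule.mapQ p p (LieAlgebra.ad ℂ g a) h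
  else 0

lemma rho_eq (p : Submodule ℂ g) (a : g) (h : p ≤ p.comap (LieAlgebra.ad ℂ g a)) :
    rho p a = Submodule.mapQ p p (LieAlgebra.ad ℂ g a) h := by
  rw [rho]; exact dif_pos h

lemma rho_apply (p : Submodule ℂ g) (a : g) (h : p ≤ p.comap (LieAlgebra.ad ℂ g a)) (x : g) :
    rho p a (Submodule.Quotient.mk x) = Submodule.Quotient.mk ⁅a, x⁆ := by
  rw [rho_eq p a h, Submodule.mapQ_apply, LieAlgebra.ad_apply]

lemma rho_add (p : Submodule ℂ g) (a b : g)
    (ha : p ≤ p.comap (LieAlgebra.ad ℂ g a)) (hb : p ≤ p.comap (LieAlgebra.ad ℂ g b)) :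
    rho p (a + b) = rho p a + rho p b := by
  have hab : p ≤ p.comap (LieAlgebra.ad ℂ g (a + b)) := by
    intro x hx
    rw [Submodule.mem_comap, LieAlgebra.ad_apply, add_lie]
    have h1 := ha hx; have h2 := hb hx
    rw [Submodule.mem_comap, LieAlgebra.ad_apply] at h1 h2
    exact p.add_mem h1 h2
  apply Submodule.linearMap_qext
  ext x
  simp only [LinearMap.comp_apply, Submodule.mkQ_apply, LinearMap.add_apply,
    rho_apply p _ hab, rho_apply p a ha, rho_apply p b hb, add_lie,
    Submodule.Quotient.mk_add]

lemma rho_zero (p : Submodule ℂ g) : rho p 0 = 0 := by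
  have h0 : p ≤ p.comap (LieAlgebra.ad ℂ g 0) := by
    intro x hx; simp [Submodule.mem_comap]
  apply Submodule.linearMap_qext
  ext x
  simp [rho_apply p 0 h0]
end Rho

lemma killing_decomp {g : Type*} [LieRing g] [LieAlgebra ℂ g] [FiniteDimensional ℂ g]
    (p : Submodule ℂ g) (DP : LieSubalgebra ℂ g)
    (hDPp : (DP : Submodule ℂ g) ≤ p)
    (hbr : ∀ a ∈ (DP : Submodule ℂ g), ∀ x ∈ p, ⁅a, x⁆ ∈ (DP : Submodule ℂ g))
    (a b : g) (ha : a ∈ DP) (hb : b ∈ DP) :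
    killingForm ℂ g a b
      = killingForm ℂ DP ⟨a, ha⟩ ⟨b, hb⟩
        + LinearMap.trace ℂ (g ⧸ p) (rho p a ∘ₗ rho p b) := by
  have ha' : a ∈ (DP : Submodule ℂ g) := ha
  have hb' : b ∈ (DP : Submodule ℂ g) := hb
  have hpa : p ≤ p.comap (LieAlgebra.ad ℂ g a) := by
    intro x hx
    rw [Submodule.mem_comap, LieAlgebra.ad_apply]
    exact hDPp (hbr a ha' x hx)
  have hpb : p ≤ p.comap (LieAlgebra.ad ℂ g b) := by
    intro x hx
    rw [Submodule.mem_comap, LieAlgebra.ad_apply]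
    exact hDPp (hbr b hb' x hx)
  set f : g →ₗ[ℂ] g := (LieAlgebra.ad ℂ g a) ∘ₗ (LieAlgebra.ad ℂ g b) with hfdef
  have hf : p ≤ p.comap f := by
    intro x hx
    rw [Submodule.mem_comap, hfdef, LinearMap.comp_apply]
    exact hpa (hpb hx)
  have hf' : ∀ x ∈ p, f x ∈ p := fun x hx => hf hx
  have hmapQ : Submodule.mapQ p p f hf = rho p a ∘ₗ rho p b := by
    apply Submodule.linearMap_qext
    ext x
    simp only [LinearMap.comp_apply, Submodule.mkQ_apply, Submodule.mapQ_apply,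
      rho_apply p b hpb, rho_apply p a hpa, hfdef, LieAlgebra.ad_apply]
  have key := my_trace_restrict_add_mapQ p f hf
  rw [hmapQ] at key
  rw [killingForm_apply_apply, key]
  congr 1
  -- trace over p of restriction equals killing form of DP
  set DP' : Submodule ℂ p := Submodule.comap p.subtype (DP : Submodule ℂ g) with hDP'
  set F1 : p →ₗ[ℂ] p := f.restrict hf' with hF1
  have hres : ∀ x : (p : Type _), F1 x ∈ DP' := by
    intro x
    rw [hDP', Submodule.mem_comap]
    have hc : ((F1 x : p) : g) = ⁅a, ⁅b, (x : g)⁆⁆ := by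
      simp [hF1, LinearMap.restrict_apply, hfdef, LieAlgebra.ad_apply]
    rw [Submodule.coe_subtype, hc]
    exact hbr a ha' _ (hDPp (hbr b hb' _ x.2))
  have hres' : ∀ x ∈ (⊤ : Submodule ℂ p), F1 x ∈ DP' := fun x _ => hres x
  have hres2 : ∀ x ∈ DP', F1 x ∈ DP' := fun x _ => hres x
  set F2 : DP' →ₗ[ℂ] DP' := F1.restrict hres2 with hF2
  set e2 : DP' ≃ₗ[ℂ] DP :=
    { toFun := fun x => ⟨((x : p) : g), x.2⟩
      invFun := fun y => ⟨⟨(y : g), hDPp y.2⟩, y.2⟩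
      map_add' := fun x y => rfl
      map_smul' := fun c x => rfl
      left_inv := fun x => rfl
      right_inv := fun y => rfl } with he2
  calc LinearMap.trace ℂ p F1
      = LinearMap.trace ℂ DP' F2 := (LinearMap.trace_restrict_eq_of_forall_mem DP' F1 hres hres2).symm
    _ = LinearMap.trace ℂ DP (e2.conj F2) := (LinearMap.trace_conj' F2 e2).symm
    _ = killingForm ℂ DP ⟨a, ha⟩ ⟨b, hb⟩ := by
        rw [killingForm_apply_apply]
        congr 1


/-- for an invariant symmetric bilinear form `κ` on `𝔤` with dual form
`κ* = −κ − κ_𝔤`, the form `κ − κ_c^𝔭` vanishes on `⁅𝔩,𝔩⁆ × ⁅𝔩,𝔩⁆` iff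
`κ*(a,b) = −κ_{⁅𝔭,𝔭⁆}(a,b)` for all `a,b` in the derived subalgebra `⁅𝔭,𝔭⁆`. -/
theorem level_condition_iff_dual_killing
    (g : Type*) [LieRing g] [LieAlgebra ℂ g] [FiniteDimensional ℂ g]
    [LieAlgebra.IsSemisimple ℂ g]
    (ξ : g)
    (hdiag : ⨆ j : ℤ, adEig ξ j = ⊤)
    (l u ubar p : Submodule ℂ g)
    (hl : l = adEig ξ 0)
    (hu : u = ⨆ j : ℤ, ⨆ _ : 0 < j, adEig ξ j)
    (hubar : ubar = ⨆ j : ℤ, ⨆ _ : j < 0, adEig ξ j)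
    (hp : p = l ⊔ ubar)
    (hpinv : ∀ a ∈ p, ∀ x ∈ p, ⁅a, x⁆ ∈ p)
    (hlp : l ≤ p)
    (dl : Submodule ℂ g)
    (hdl : dl = Submodule.span ℂ {z : g | ∃ x ∈ l, ∃ y ∈ l, z = ⁅x, y⁆})
    (hdll : dl ≤ l)
    (DP : LieSubalgebra ℂ g)
    (hDP : (DP : Submodule ℂ g) = Submodule.span ℂ {z : g | ∃ x ∈ p, ∃ y ∈ p, z = ⁅x, y⁆})
    (κ : LinearMap.BilinForm ℂ g)
    (hκsymm : ∀ x y : g, κ x y = κ y x)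
    (hκinv : ∀ c x y : g, κ ⁅c, x⁆ y + κ x ⁅c, y⁆ = 0) :
    (∀ a, ∀ ha : a ∈ dl, ∀ b, ∀ hb : b ∈ dl,
        κ a b - kappaC p a b
            (fun x hx => hpinv a (hlp (hdll ha)) x hx)
            (fun x hx => hpinv b (hlp (hdll hb)) x hx) = 0)
      ↔ (∀ a b : DP,
          - κ (a : g) (b : g) - killingForm ℂ g (a : g) (b : g)
            = - killingForm ℂ DP a b) := by
  classical
  -- basic eigenvector characterization
  have hEig : ∀ (i : ℤ) (x : g), x ∈ adEig ξ i ↔ ⁅ξ, x⁆ = (i : ℂ) • x := by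
    intro i x
    rw [adEig, Module.End.mem_eigenspace_iff, LieAlgebra.ad_apply]
  have hξ0 : ξ ∈ adEig ξ 0 := by
    rw [hEig]; simp
  have hξp : ξ ∈ p := hlp (hl ▸ hξ0)
  have hubarp : ubar ≤ p := hp ▸ le_sup_right
  have hdlp : dl ≤ p := fun x hx => hlp (hdll hx)
  have hcom : ∀ a ∈ p, p ≤ p.comap (LieAlgebra.ad ℂ g a) := by
    intro a hap x hx
    rw [Submodule.mem_comap, LieAlgebra.ad_apply]
    exact hpinv a hap x hx
  have hEigUbar : ∀ j : ℤ, j < 0 → adEig ξ j ≤ ubar := by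
    intro j hj
    rw [hubar]
    calc adEig ξ j ≤ ⨆ _ : j < 0, adEig ξ j := le_iSup (fun _ : j < 0 => adEig ξ j) hj
      _ ≤ ⨆ j : ℤ, ⨆ _ : j < 0, adEig ξ j :=
          le_iSup (fun j : ℤ => ⨆ _ : j < 0, adEig ξ j) j
  have hbrEig : ∀ (i j : ℤ) (x y : g), x ∈ adEig ξ i → y ∈ adEig ξ j →
      ⁅x, y⁆ ∈ adEig ξ (i + j) := by
    intro i j x y hx hy
    rw [hEig] at hx hy ⊢
    rw [leibniz_lie, hx, hy, smul_lie, lie_smul]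
    push_cast
    rw [add_smul]
  -- the G-form vanishing lemmas
  have Gzero_right : ∀ a : g,
      κ a 0 + LinearMap.trace ℂ (g ⧸ p) (rho p a ∘ₗ rho p 0) = 0 := by
    intro a
    rw [rho_zero]
    simp
  have Gzero_left : ∀ b : g,
      κ 0 b + LinearMap.trace ℂ (g ⧸ p) (rho p 0 ∘ₗ rho p b) = 0 := by
    intro b
    rw [rho_zero]
    simp
  have Gsymm : ∀ a b : g,
      κ a b + LinearMap.trace ℂ (g ⧸ p) (rho p a ∘ₗ rho p b)
        = κ b a + LinearMap.trace ℂ (g ⧸ p) (rho p b ∘ₗ rho p a) := by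
    intro a b
    rw [hκsymm a b, LinearMap.trace_comp_comm']
  have Gadd_left : ∀ a1 a2 b : g, a1 ∈ p → a2 ∈ p →
      κ (a1 + a2) b + LinearMap.trace ℂ (g ⧸ p) (rho p (a1 + a2) ∘ₗ rho p b)
        = (κ a1 b + LinearMap.trace ℂ (g ⧸ p) (rho p a1 ∘ₗ rho p b))
          + (κ a2 b + LinearMap.trace ℂ (g ⧸ p) (rho p a2 ∘ₗ rho p b)) := by
    intro a1 a2 b h1 h2
    rw [rho_add p a1 a2 (hcom a1 h1) (hcom a2 h2), LinearMap.add_comp, map_add, map_add,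
      LinearMap.add_apply]
    ring
  have Gadd_right : ∀ a b1 b2 : g, b1 ∈ p → b2 ∈ p →
      κ a (b1 + b2) + LinearMap.trace ℂ (g ⧸ p) (rho p a ∘ₗ rho p (b1 + b2))
        = (κ a b1 + LinearMap.trace ℂ (g ⧸ p) (rho p a ∘ₗ rho p b1))
          + (κ a b2 + LinearMap.trace ℂ (g ⧸ p) (rho p a ∘ₗ rho p b2)) := by
    intro a b1 b2 h1 h2
    rw [rho_add p b1 b2 (hcom b1 h1) (hcom b2 h2), LinearMap.comp_add, map_add, map_add]
    ring
  -- grading vanishing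
  have Gvan : ∀ (i j : ℤ), i + j ≠ 0 → ∀ a, a ∈ adEig ξ i → a ∈ p →
      ∀ b, b ∈ adEig ξ j → b ∈ p →
      κ a b + LinearMap.trace ℂ (g ⧸ p) (rho p a ∘ₗ rho p b) = 0 := by
    intro i j hij a hai hap b hbj hbp
    have hca := hcom a hap
    have hcb := hcom b hbp
    have hcξ := hcom ξ hξp
    have hia : ⁅ξ, a⁆ = (i : ℂ) • a := (hEig i a).mp hai
    have hjb : ⁅ξ, b⁆ = (j : ℂ) • b := (hEig j b).mp hbj
    have hijC : (i : ℂ) + (j : ℂ) ≠ 0 := by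
      rw [← Int.cast_add]
      exact_mod_cast Int.cast_ne_zero.mpr hij
    -- kappa part
    have hκ0 : κ a b = 0 := by
      have h1 := hκinv ξ a b
      rw [hia, hjb, map_smul, LinearMap.smul_apply, map_smul] at h1
      have h2 : ((i : ℂ) + (j : ℂ)) * κ a b = 0 := by
        rw [smul_eq_mul, smul_eq_mul] at h1
        linear_combination h1
      rcases mul_eq_zero.mp h2 with h | h
      · exact absurd h hijC
      · exact h
    -- trace part
    have htr0 : LinearMap.trace ℂ (g ⧸ p) (rho p a ∘ₗ rho p b) = 0 := by
      set S := rho p a ∘ₗ rho p b with hS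
      have hcommS : rho p ξ ∘ₗ S - S ∘ₗ rho p ξ = ((i : ℂ) + (j : ℂ)) • S := by
        apply Submodule.linearMap_qext
        ext x
        have lie1 : ⁅ξ, ⁅a, ⁅b, x⁆⁆⁆
            = (i : ℂ) • ⁅a, ⁅b, x⁆⁆ + (j : ℂ) • ⁅a, ⁅b, x⁆⁆ + ⁅a, ⁅b, ⁅ξ, x⁆⁆⁆ := by
          rw [leibniz_lie ξ a ⁅b, x⁆, leibniz_lie ξ b x, hia, hjb]
          simp only [smul_lie, lie_smul, lie_add]
          abel
        simp only [LinearMap.comp_apply, LinearMap.sub_apply, LinearMap.smul_apply,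
          Submodule.mkQ_apply, hS, rho_apply p ξ hcξ, rho_apply p a hca, rho_apply p b hcb]
        rw [lie1]
        simp only [Submodule.Quotient.mk_add, Submodule.Quotient.mk_smul, add_smul]
        abel
      have h3 := congrArg (LinearMap.trace ℂ (g ⧸ p)) hcommS
      rw [map_sub, LinearMap.trace_comp_comm' (rho p ξ) S, sub_self, map_smul] at h3
      rcases smul_eq_zero.mp h3.symm with h | h
      · exact absurd h hijC
      · exact h
    rw [hκ0, htr0, add_zero]
  -- vanishing when right argument in ubar
  have Aright : ∀ (i : ℤ), i ≤ 0 → ∀ a, a ∈ adEig ξ i → a ∈ p → ∀ b, b ∈ ubar →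
      κ a b + LinearMap.trace ℂ (g ⧸ p) (rho p a ∘ₗ rho p b) = 0 := by
    intro i hi a hai hap b hb
    rw [hubar] at hb
    refine (Submodule.iSup_induction _
      (motive := fun x => x ∈ p ∧
        κ a x + LinearMap.trace ℂ (g ⧸ p) (rho p a ∘ₗ rho p x) = 0) hb ?_ ?_ ?_).2
    · intro j x hx
      by_cases h : j < 0
      · rw [iSup_pos h] at hx
        have hxp : x ∈ p := hubarp (hEigUbar j h hx)
        exact ⟨hxp, Gvan i j (by omega) a hai hap x hx hxp⟩
      · rw [iSup_neg h] at hx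
        rw [Submodule.mem_bot] at hx
        subst hx
        exact ⟨p.zero_mem, Gzero_right a⟩
    · exact ⟨p.zero_mem, Gzero_right a⟩
    · rintro x y ⟨hxp, hx0⟩ ⟨hyp, hy0⟩
      refine ⟨p.add_mem hxp hyp, ?_⟩
      rw [Gadd_right a x y hxp hyp, hx0, hy0, add_zero]
  have Aleft : ∀ (j : ℤ), j ≤ 0 → ∀ b, b ∈ adEig ξ j → b ∈ p → ∀ a, a ∈ ubar →
      κ a b + LinearMap.trace ℂ (g ⧸ p) (rho p a ∘ₗ rho p b) = 0 := by
    intro j hj b hbj hbp a ha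
    rw [Gsymm a b]
    exact Aright j hj b hbj hbp a ha
  have Hubub : ∀ a, a ∈ ubar → ∀ b, b ∈ ubar →
      κ a b + LinearMap.trace ℂ (g ⧸ p) (rho p a ∘ₗ rho p b) = 0 := by
    intro a ha b hb
    rw [hubar] at ha
    refine (Submodule.iSup_induction _
      (motive := fun x => x ∈ p ∧
        κ x b + LinearMap.trace ℂ (g ⧸ p) (rho p x ∘ₗ rho p b) = 0) ha ?_ ?_ ?_).2
    · intro j x hx
      by_cases h : j < 0
      · rw [iSup_pos h] at hx
        have hxp : x ∈ p := hubarp (hEigUbar j h hx)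
        exact ⟨hxp, Aright j h.le x hx hxp b hb⟩
      · rw [iSup_neg h] at hx
        rw [Submodule.mem_bot] at hx
        subst hx
        exact ⟨p.zero_mem, Gzero_left b⟩
    · exact ⟨p.zero_mem, Gzero_left b⟩
    · rintro x y ⟨hxp, hx0⟩ ⟨hyp, hy0⟩
      refine ⟨p.add_mem hxp hyp, ?_⟩
      rw [Gadd_left x y b hxp hyp, hx0, hy0, add_zero]
  -- brackets into ubar
  have Lbr : ∀ (i : ℤ), i ≤ 0 → ∀ x, x ∈ adEig ξ i → ∀ y, y ∈ ubar → ⁅x, y⁆ ∈ ubar := by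
    intro i hi x hx y hy
    rw [hubar] at hy
    refine (Submodule.iSup_induction _ (motive := fun y => ⁅x, y⁆ ∈ ubar) hy ?_ ?_ ?_)
    · intro j z hz
      by_cases h : j < 0
      · rw [iSup_pos h] at hz
        exact hEigUbar (i + j) (by omega) (hbrEig i j x z hx hz)
      · rw [iSup_neg h] at hz
        rw [Submodule.mem_bot] at hz
        subst hz
        rw [lie_zero]
        exact ubar.zero_mem
    · show ⁅x, (0 : g)⁆ ∈ ubar
      rw [lie_zero]; exact ubar.zero_mem
    · intro z w hz hw
      rw [lie_add]
      exact ubar.add_mem hz hw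
  have LbrU : ∀ x, x ∈ ubar → ∀ y, y ∈ ubar → ⁅x, y⁆ ∈ ubar := by
    intro x hx y hy
    rw [hubar] at hx
    refine (Submodule.iSup_induction _ (motive := fun x => ⁅x, y⁆ ∈ ubar) hx ?_ ?_ ?_)
    · intro j z hz
      by_cases h : j < 0
      · rw [iSup_pos h] at hz
        exact Lbr j h.le z hz y hy
      · rw [iSup_neg h] at hz
        rw [Submodule.mem_bot] at hz
        subst hz
        rw [zero_lie]
        exact ubar.zero_mem
    · show ⁅(0 : g), y⁆ ∈ ubar
      rw [zero_lie]; exact ubar.zero_mem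
    · intro z w hz hw
      rw [add_lie]
      exact ubar.add_mem hz hw
  -- DP submodule facts
  have hDPle : (DP : Submodule ℂ g) ≤ p := by
    rw [hDP, Submodule.span_le]
    rintro z ⟨x, hx, y, hy, rfl⟩
    exact hpinv x hx y hy
  have hbrDP : ∀ a ∈ (DP : Submodule ℂ g), ∀ x ∈ p, ⁅a, x⁆ ∈ (DP : Submodule ℂ g) := by
    intro a ha x hx
    rw [hDP]
    exact Submodule.subset_span ⟨a, hDPle ha, x, hx, rfl⟩
  have hDPeq : (DP : Submodule ℂ g) = dl ⊔ ubar := by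
    apply le_antisymm
    · rw [hDP, Submodule.span_le]
      rintro z ⟨x, hx, y, hy, rfl⟩
      rw [hp] at hx hy
      obtain ⟨xl, hxl, xu, hxu, rfl⟩ := Submodule.mem_sup.mp hx
      obtain ⟨yl, hyl, yu, hyu, rfl⟩ := Submodule.mem_sup.mp hy
      have h1 : ⁅xl, yl⁆ ∈ dl := by
        rw [hdl]; exact Submodule.subset_span ⟨xl, hxl, yl, hyl, rfl⟩
      have h2 : ⁅xl, yu⁆ ∈ ubar := Lbr 0 le_rfl xl (hl ▸ hxl) yu hyu
      have h3 : ⁅xu, yl⁆ ∈ ubar := by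
        have h3' : ⁅yl, xu⁆ ∈ ubar := Lbr 0 le_rfl yl (hl ▸ hyl) xu hxu
        rw [← lie_skew]
        exact ubar.neg_mem h3'
      have h4 : ⁅xu, yu⁆ ∈ ubar := LbrU xu hxu yu hyu
      rw [add_lie, lie_add, lie_add]
      have hld : dl ≤ dl ⊔ ubar := le_sup_left
      have hud : ubar ≤ dl ⊔ ubar := le_sup_right
      exact add_mem (add_mem (hld h1) (hud h2)) (add_mem (hud h3) (hud h4))
    · apply sup_le
      · rw [hdl, hDP]
        apply Submodule.span_mono
        rintro z ⟨x, hx, y, hy, rfl⟩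
        exact ⟨x, hlp hx, y, hlp hy, rfl⟩
      · rw [hubar]
        apply iSup_le
        intro j
        apply iSup_le
        intro hj
        intro y hy
        have hyub : y ∈ ubar := hEigUbar j hj hy
        have hy' : ⁅ξ, y⁆ = (j : ℂ) • y := (hEig j y).mp hy
        have hne : (j : ℂ) ≠ 0 := Int.cast_ne_zero.mpr hj.ne
        have heq : y = ⁅(j : ℂ)⁻¹ • ξ, y⁆ := by
          rw [smul_lie, hy', smul_smul, inv_mul_cancel₀ hne, one_smul]
        have hmem : ⁅(j : ℂ)⁻¹ • ξ, y⁆ ∈ (DP : Submodule ℂ g) := by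
          rw [hDP]
          exact Submodule.subset_span ⟨(j : ℂ)⁻¹ • ξ, p.smul_mem _ hξp, y, hubarp hyub, rfl⟩
        rwa [← heq] at hmem
  -- kappaC in terms of rho
  have hkc : ∀ (a b : g) (hA : p ≤ p.comap (LieAlgebra.ad ℂ g a))
      (hB : p ≤ p.comap (LieAlgebra.ad ℂ g b)),
      kappaC p a b hA hB = - LinearMap.trace ℂ (g ⧸ p) (rho p a ∘ₗ rho p b) := by
    intro a b hA hB
    rw [kappaC, rho_eq p a hA, rho_eq p b hB]
  -- G vanishes on DP iff on dl
  have hGDP : (∀ a, a ∈ dl → ∀ b, b ∈ dl →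
        κ a b + LinearMap.trace ℂ (g ⧸ p) (rho p a ∘ₗ rho p b) = 0)
      → ∀ a, a ∈ (DP : Submodule ℂ g) → ∀ b, b ∈ (DP : Submodule ℂ g) →
        κ a b + LinearMap.trace ℂ (g ⧸ p) (rho p a ∘ₗ rho p b) = 0 := by
    intro h a ha b hb
    rw [hDPeq] at ha hb
    obtain ⟨a0, ha0, a1, ha1, rfl⟩ := Submodule.mem_sup.mp ha
    obtain ⟨b0, hb0, b1, hb1, rfl⟩ := Submodule.mem_sup.mp hb
    have ha0p : a0 ∈ p := hdlp ha0
    have ha1p : a1 ∈ p := hubarp ha1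
    have hb0p : b0 ∈ p := hdlp hb0
    have hb1p : b1 ∈ p := hubarp hb1
    rw [Gadd_left a0 a1 (b0 + b1) ha0p ha1p,
      Gadd_right a0 b0 b1 hb0p hb1p, Gadd_right a1 b0 b1 hb0p hb1p]
    have t1 := h a0 ha0 b0 hb0
    have t2 : κ a0 b1 + LinearMap.trace ℂ (g ⧸ p) (rho p a0 ∘ₗ rho p b1) = 0 :=
      Aright 0 le_rfl a0 (hl ▸ hdll ha0) ha0p b1 hb1
    have t3 : κ a1 b0 + LinearMap.trace ℂ (g ⧸ p) (rho p a1 ∘ₗ rho p b0) = 0 :=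
      Aleft 0 le_rfl b0 (hl ▸ hdll hb0) hb0p a1 ha1
    have t4 := Hubub a1 ha1 b1 hb1
    rw [t1, t2, t3, t4]
    ring
  constructor
  · intro hL a b
    have ha' : (a : g) ∈ (DP : Submodule ℂ g) := a.2
    have hb' : (b : g) ∈ (DP : Submodule ℂ g) := b.2
    have hG : κ (a : g) (b : g)
        + LinearMap.trace ℂ (g ⧸ p) (rho p (a : g) ∘ₗ rho p (b : g)) = 0 := by
      refine hGDP ?_ (a : g) ha' (b : g) hb'
      intro x hx y hy
      have := hL x hx y hy
      have e := hkc x y (fun z hz => hpinv x (hlp (hdll hx)) z hz)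
        (fun z hz => hpinv y (hlp (hdll hy)) z hz)
      linear_combination this + e
    have hdec := killing_decomp p DP hDPle hbrDP (a : g) (b : g) a.2 b.2
    have haa : (⟨(a : g), a.2⟩ : DP) = a := rfl
    have hbb : (⟨(b : g), b.2⟩ : DP) = b := rfl
    rw [haa, hbb] at hdec
    rw [hdec]
    linear_combination - hG
  · intro hR x hx y hy
    have hx' : x ∈ (DP : Submodule ℂ g) := (hDPeq ▸ (le_sup_left : dl ≤ dl ⊔ ubar)) hx
    have hy' : y ∈ (DP : Submodule ℂ g) := (hDPeq ▸ (le_sup_left : dl ≤ dl ⊔ ubar)) hy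
    have hRxy := hR ⟨x, hx'⟩ ⟨y, hy'⟩
    have hdec := killing_decomp p DP hDPle hbrDP x y hx' hy'
    rw [hdec] at hRxy
    have e := hkc x y (fun z hz => hpinv x (hlp (hdll hx)) z hz)
      (fun z hz => hpinv y (hlp (hdll hy)) z hz)
    linear_combination - hRxy - e
end

section
/- Let x, y : V → V be linear endomorphisms such that x(L) ⊆ L, y(L) ⊆ L, and ω(x(u), v) + ω(u, x(v)) = 0 and ω(y(u), v) + ω(u, y(v)) = 0 for all u, v ∈ V. Then tr_V(x∘y) = 2·tr_L((x∘y)|_L), i.e. the trace of x∘y on V is twice the trace of its restriction to L. -/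
open Module LinearMap

private lemma trace_prod_decomp (K M N : Type*) [Field K] [AddCommGroup M] [Module K M]
    [AddCommGroup N] [Module K N] [FiniteDimensional K M] [FiniteDimensional K N]
    (F : (M × N) →ₗ[K] (M × N)) :
    LinearMap.trace K (M × N) F
      = LinearMap.trace K M (fst K M N ∘ₗ (F ∘ₗ inl K M N))
        + LinearMap.trace K N (snd K M N ∘ₗ (F ∘ₗ inr K M N)) := by
  have h : F = (F ∘ₗ inl K M N) ∘ₗ fst K M N + (F ∘ₗ inr K M N) ∘ₗ snd K M N := by
    ext v <;> simp <;> rw [show ((0, 0) : M × N) = 0 from rfl, map_zero] <;> simp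
  conv_lhs => rw [h]
  rw [map_add, LinearMap.trace_comp_comm' (F ∘ₗ inl K M N) (fst K M N),
    LinearMap.trace_comp_comm' (F ∘ₗ inr K M N) (snd K M N)]

/-- if `V` is a finite-dimensional vector space over a field of characteristic
zero, `ω` a nondegenerate alternating bilinear form on `V`, `L` a Lagrangian subspace, and
`x, y` endomorphisms preserving `L` and infinitesimally symplectic for `ω`, then
`tr_V(x∘y) = 2·tr_L((x∘y)|_L)`. -/
theorem trace_eq_two_mul_trace_restrict_lagrangian
    (K : Type*) [Field K] [CharZero K]
    (V : Type*) [AddCommGroup V] [Module K V] [FiniteDimensional K V]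
    (ω : LinearMap.BilinForm K V)
    (halt : ∀ v : V, ω v v = 0)
    (hnd : ∀ v : V, (∀ w : V, ω v w = 0) → v = 0)
    (L : Submodule K V)
    (hL0 : ∀ u ∈ L, ∀ v ∈ L, ω u v = 0)
    (hLdim : 2 * Module.finrank K L = Module.finrank K V)
    (x y : V →ₗ[K] V)
    (hxL : ∀ v ∈ L, x v ∈ L) (hyL : ∀ v ∈ L, y v ∈ L)
    (hxω : ∀ u v : V, ω (x u) v + ω u (x v) = 0)
    (hyω : ∀ u v : V, ω (y u) v + ω u (y v) = 0) :
    LinearMap.trace K V (x ∘ₗ y)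
      = 2 * LinearMap.trace K L ((x ∘ₗ y).restrict (fun v hv => hxL _ (hyL v hv))) := by
  classical
  have hskew : ∀ u v : V, ω u v = -ω v u := by
    intro u v
    have h := halt (u + v)
    simp only [map_add, LinearMap.add_apply] at h
    rw [halt u, halt v] at h
    linear_combination h
  -- the pairing map g : V → Dual K L, g v l = ω l v
  set g : V →ₗ[K] Module.Dual K L := (L.subtype.dualMap) ∘ₗ ω.flip with hg
  have hgapp : ∀ (v : V) (l : L), g v l = ω l v := fun v l => rfl
  have hflip_inj : Function.Injective ω.flip := by
    rw [← LinearMap.ker_eq_bot, Submodule.eq_bot_iff]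
    intro v hv
    apply hnd
    intro w
    have h0 : ω.flip v w = 0 := by rw [LinearMap.mem_ker.mp hv]; rfl
    rw [hskew]
    simpa using h0
  have hflip_surj : Function.Surjective ω.flip :=
    (LinearMap.injective_iff_surjective_of_finrank_eq_finrank
      (Subspace.dual_finrank_eq (K := K) (V := V)).symm).mp hflip_inj
  have hg_surj : Function.Surjective g :=
    (LinearMap.dualMap_surjective_of_injective L.injective_subtype).comp hflip_surj
  have hLle : L ≤ LinearMap.ker g := by
    intro v hv
    rw [LinearMap.mem_ker]
    ext l
    exact hL0 l l.2 v hv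
  have hker : LinearMap.ker g = L := by
    symm
    apply Submodule.eq_of_le_of_finrank_eq hLle
    have h1 := LinearMap.finrank_range_add_finrank_ker g
    rw [LinearMap.range_eq_top.mpr hg_surj, finrank_top, Subspace.dual_finrank_eq] at h1
    omega
  obtain ⟨W, hW⟩ := Submodule.exists_isCompl L
  have hWdim : Module.finrank K W = Module.finrank K L := by
    have := Submodule.finrank_add_eq_of_isCompl hW
    omega
  set e := Submodule.prodEquivOfIsCompl L W hW with he
  set F : (L × W) →ₗ[K] (L × W) := e.symm.conj (x ∘ₗ y) with hF
  have hmemxy : ∀ v ∈ L, (x ∘ₗ y) v ∈ L := fun v hv => hxL _ (hyL v hv)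
  have hFapp : ∀ q : L × W, F q = e.symm ((x ∘ₗ y) (e q)) := by
    intro q
    simp [hF, LinearEquiv.conj_apply]
  -- the (L,L) block is the restriction
  have hA : fst K L W ∘ₗ (F ∘ₗ inl K L W) = (x ∘ₗ y).restrict hmemxy := by
    ext l
    have h1 : e ((l : L), (0 : W)) = (l : V) := by
      simp [he, Submodule.coe_prodEquivOfIsCompl']
    have h2 : (x ∘ₗ y) (l : V) = (((x ∘ₗ y).restrict hmemxy l : L) : V) := rfl
    have : F (l, 0) = ((x ∘ₗ y).restrict hmemxy l, 0) := by
      rw [hFapp, h1, h2, Submodule.prodEquivOfIsCompl_symm_apply_left]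
    simp [this]
  -- the pairing restricted to W is a bijection onto Dual L
  set p : W →ₗ[K] Module.Dual K L := g ∘ₗ W.subtype with hp
  have hp_inj : Function.Injective p := by
    rw [← LinearMap.ker_eq_bot, Submodule.eq_bot_iff]
    intro w hw
    have h1 : (w : V) ∈ LinearMap.ker g := LinearMap.mem_ker.mpr (LinearMap.mem_ker.mp hw)
    rw [hker] at h1
    have h2 : (w : V) = 0 := by
      have := hW.disjoint
      rw [Submodule.disjoint_def] at this
      exact this _ h1 w.2
    exact Subtype.ext h2
  have hp_surj : Function.Surjective p :=
    (LinearMap.injective_iff_surjective_of_finrank_eq_finrank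
      (by rw [hWdim, Subspace.dual_finrank_eq])).mp hp_inj
  set P : W ≃ₗ[K] Module.Dual K L := LinearEquiv.ofBijective p ⟨hp_inj, hp_surj⟩ with hP
  set T : L →ₗ[K] L := (y ∘ₗ x).restrict (fun v hv => hyL _ (hxL v hv)) with hT
  set D : W →ₗ[K] W := snd K L W ∘ₗ (F ∘ₗ inr K L W) with hD
  -- key equivariance
  have key : ∀ w : W, p (D w) = T.dualMap (p w) := by
    intro w
    ext l
    have hDw : (D w : V) = (x ∘ₗ y) (w : V) - ((e.symm ((x ∘ₗ y) (w : V))).1 : V) := by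
      have h1 : e ((0 : L), (w : W)) = (w : V) := by
        simp [he, Submodule.coe_prodEquivOfIsCompl']
      have h2 : F (0, w) = e.symm ((x ∘ₗ y) (w : V)) := by rw [hFapp, h1]
      have h3 : ((x ∘ₗ y) (w : V))
          = ((e.symm ((x ∘ₗ y) (w : V))).1 : V) + ((e.symm ((x ∘ₗ y) (w : V))).2 : V) := by
        conv_lhs => rw [← e.apply_symm_apply ((x ∘ₗ y) (w : V))]
        rw [Submodule.coe_prodEquivOfIsCompl']
      have h4 : (D w : V) = ((e.symm ((x ∘ₗ y) (w : V))).2 : V) := by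
        simp [hD, h2]
      rw [h4, eq_sub_iff_add_eq, add_comm]
      exact h3.symm
    have hLpart : ω (l : V) ((e.symm ((x ∘ₗ y) (w : V))).1 : V) = 0 :=
      hL0 _ l.2 _ (e.symm ((x ∘ₗ y) (w : V))).1.2
    have hgoal1 : p (D w) l = ω (l : V) ((x ∘ₗ y) (w : V)) := by
      show ω (l : V) (D w : V) = _
      rw [hDw, map_sub, hLpart, sub_zero]
    have hgoal2 : T.dualMap (p w) l = ω ((y ∘ₗ x) (l : V)) (w : V) := rfl
    rw [hgoal1, hgoal2]
    have e1 := hxω (l : V) (y (w : V))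
    have e2 := hyω (x (l : V)) (w : V)
    simp only [LinearMap.comp_apply]
    linear_combination e1 - e2
  have hDconj : D = P.symm.conj T.dualMap := by
    refine LinearMap.ext fun w => ?_
    have hc : (P.symm.conj T.dualMap) w = P.symm (T.dualMap (P w)) := by
      simp [LinearEquiv.conj_apply]
    rw [hc, LinearEquiv.eq_symm_apply]
    exact key w
  have htrD : LinearMap.trace K W D = LinearMap.trace K L T := by
    rw [hDconj, LinearMap.trace_conj']
    have hTd : T.dualMap = Module.Dual.transpose (R := K) T := rfl
    rw [hTd, LinearMap.trace_transpose']
  -- T and the restriction of x∘y have the same trace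
  have htrT : LinearMap.trace K L T
      = LinearMap.trace K L ((x ∘ₗ y).restrict hmemxy) := by
    have h1 : T = (y.restrict hyL) ∘ₗ (x.restrict hxL) := by
      ext l; rfl
    have h2 : (x ∘ₗ y).restrict hmemxy = (x.restrict hxL) ∘ₗ (y.restrict hyL) := by
      ext l; rfl
    rw [h1, h2, ← Module.End.mul_eq_comp, ← Module.End.mul_eq_comp, LinearMap.trace_mul_comm]
  have hmain : LinearMap.trace K V (x ∘ₗ y)
      = LinearMap.trace K L ((x ∘ₗ y).restrict hmemxy)
        + LinearMap.trace K L ((x ∘ₗ y).restrict hmemxy) := by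
    rw [← LinearMap.trace_conj' (x ∘ₗ y) e.symm, ← hF, trace_prod_decomp, hA, ← hD, htrD, htrT]
  rw [hmain]
  ring
end

section
/- Let 𝔤 be a finite-dimensional semisimple Lie algebra over ℂ, let (e,h,f) be an sl₂-triple in 𝔤 (⁅h,e⁆ = 2e, ⁅h,f⁆ = −2f, ⁅e,f⁆ = h), and let x ∈ 𝔤 satisfy ⁅e,x⁆ = 0, ⁅h,x⁆ = 0 and ⁅f,x⁆ = 0. If ad(f + x) is a nilpotent endomorphism of 𝔤, then ad(x) is a nilpotent endomorphism of 𝔤. -/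
open Module LinearMap

attribute [local instance 100] LieRing.ofAssociativeRing

/-- If `A * B - B * A = c • B` with `c ≠ 0` on a finite-dimensional complex vector space,
then `B` is nilpotent. -/
lemma aux_nilpotent_of_bracket_smul {V : Type*} [AddCommGroup V] [Module ℂ V]
    [FiniteDimensional ℂ V] (A B : Module.End ℂ V) (c : ℂ) (hc : c ≠ 0)
    (hAB : A * B - B * A = c • B) : IsNilpotent B := by
  have h1 : A * B = c • B + B * A := eq_add_of_sub_eq hAB
  have key : ∀ μ : ℂ, (A - (μ + c) • 1) * B = B * (A - μ • 1) := fun μ => by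
    rw [sub_mul, mul_sub, smul_mul_assoc, one_mul, mul_smul_comm, mul_one, h1, add_smul]
    abel
  have pw : ∀ (μ : ℂ) (k : ℕ), (A - (μ + c) • 1) ^ k * B = B * (A - μ • 1) ^ k := by
    intro μ k
    induction k with
    | zero => simp
    | succ k ih =>
      rw [pow_succ, mul_assoc, key, ← mul_assoc, ih, mul_assoc, ← pow_succ]
  have mapsTo : ∀ (μ : ℂ) (v : V), v ∈ A.maxGenEigenspace μ →
      B v ∈ A.maxGenEigenspace (μ + c) := by
    intro μ v hv
    rw [Module.End.mem_maxGenEigenspace] at hv ⊢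
    obtain ⟨k, hk⟩ := hv
    exact ⟨k, by
      have := congrArg (fun T : Module.End ℂ V => T v) (pw μ k)
      simpa [hk] using this⟩
  have iter : ∀ (n : ℕ) (μ : ℂ) (v : V), v ∈ A.maxGenEigenspace μ →
      (B ^ n) v ∈ A.maxGenEigenspace (μ + n • c) := by
    intro n
    induction n with
    | zero => intro μ v hv; simpa using hv
    | succ n ih =>
      intro μ v hv
      have hmt := mapsTo _ _ (ih μ v hv)
      have harith : μ + (n + 1 : ℕ) • c = μ + n • c + c := by push_cast; ring
      rw [pow_succ', harith]
      simpa using hmt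
  -- every generalized eigenvector is killed by some power of B
  have kill : ∀ (μ : ℂ) (v : V), v ∈ A.maxGenEigenspace μ → ∃ n : ℕ, (B ^ n) v = 0 := by
    intro μ v hv
    have hfin : Set.Finite (spectrum ℂ A) := Module.End.finite_spectrum A
    have hinj : Function.Injective (fun n : ℕ => μ + n • c) := by
      intro a b hab
      simp only [nsmul_eq_mul, add_right_inj] at hab
      exact_mod_cast mul_right_cancel₀ hc hab
    obtain ⟨n, hn⟩ : ∃ n : ℕ, μ + n • c ∉ spectrum ℂ A := by
      by_contra hcon
      push_neg at hcon
      exact Set.infinite_of_injective_forall_mem hinj hcon hfin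
    refine ⟨n, ?_⟩
    by_contra hne
    have hmem := iter n μ v hv
    have : Module.End.HasUnifEigenvalue A (μ + n • c) ⊤ := by
      rw [Module.End.HasUnifEigenvalue, Submodule.ne_bot_iff]
      exact ⟨(B ^ n) v, hmem, hne⟩
    exact hn (this.lt zero_lt_one).mem_spectrum
  -- conclude
  rw [LinearMap.isNilpotent_iff_charpoly, LinearMap.charpoly_eq_X_pow_iff]
  intro v
  have hv : v ∈ ⨆ μ : ℂ, A.maxGenEigenspace μ := by
    rw [Module.End.iSup_maxGenEigenspace_eq_top A]; trivial
  refine Submodule.iSup_induction (motive := fun w : V => ∃ n : ℕ, (B ^ n) w = 0) _ hv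
    (fun μ w hw => kill μ w hw) ⟨1, by simp⟩ ?_
  rintro y z ⟨m, hm⟩ ⟨k, hk⟩
  refine ⟨m + k, ?_⟩
  rw [map_add]
  have h1 : (B ^ (m + k)) y = 0 := by rw [add_comm, pow_add, Module.End.mul_apply, hm, map_zero]
  have h2 : (B ^ (m + k)) z = 0 := by rw [pow_add, Module.End.mul_apply, hk, map_zero]
  rw [h1, h2, add_zero]

/-- let `𝔤` be a finite-dimensional semisimple complex Lie algebra,
`(e,h,f)` an sl₂-triple, and `x` an element of the centralizer of the triple.
If `ad (f + x)` is nilpotent, then `ad x` is nilpotent. -/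
theorem ad_nilpotent_of_ad_add_nilpotent
    (g : Type*) [LieRing g] [LieAlgebra ℂ g] [FiniteDimensional ℂ g]
    [LieAlgebra.IsSemisimple ℂ g]
    (e h f : g)
    (hhe : ⁅h, e⁆ = (2 : ℂ) • e) (hhf : ⁅h, f⁆ = (-2 : ℂ) • f) (hef : ⁅e, f⁆ = h)
    (x : g)
    (hxe : ⁅e, x⁆ = 0) (hxh : ⁅h, x⁆ = 0) (hxf : ⁅f, x⁆ = 0)
    (hnil : IsNilpotent (LieAlgebra.ad ℂ g (f + x))) :
    IsNilpotent (LieAlgebra.ad ℂ g x) := by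
  set ad := LieAlgebra.ad ℂ g
  -- ad f is nilpotent
  have hbr : ad h * ad f - ad f * ad h = (-2 : ℂ) • ad f := by
    have : ⁅ad h, ad f⁆ = ad ⁅h, f⁆ := (LieHom.map_lie (LieAlgebra.ad ℂ g) h f).symm
    rw [Ring.lie_def] at this
    rw [this, hhf, map_smul]
  have hfnil : IsNilpotent (ad f) := aux_nilpotent_of_bracket_smul (ad h) (ad f) (-2) (by norm_num) hbr
  -- ad x = ad (f + x) - ad f, commuting difference of nilpotents
  have hcomm : Commute (ad (f + x)) (ad f) := by
    have : ⁅ad (f + x), ad f⁆ = ad ⁅f + x, f⁆ := (LieHom.map_lie (LieAlgebra.ad ℂ g) _ _).symm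
    rw [Ring.lie_def] at this
    have hz : ⁅f + x, f⁆ = 0 := by
      rw [add_lie, lie_self, zero_add, ← lie_skew, hxf, neg_zero]
    rw [Commute, SemiconjBy, ← sub_eq_zero, this, hz, map_zero]
  have : IsNilpotent (ad (f + x) - ad f) := hcomm.isNilpotent_sub hnil hfnil
  have hx : ad (f + x) - ad f = ad x := by rw [map_add]; abel
  rwa [hx] at this
end
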